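/- arXiv:2511.08757 — 9 statements merged into one kernel-verified Lean document; each statement's English description precedes it below -/
import Mathlib

section
/- Let $\mathbb{F}$ be a field and let $W_1, \ldots, W_n$ be hyperplanes (codimension-1 subspaces) of $\mathbb{F}^n$ with $W_1 \cap \cdots \cap W_n = 0$. Then there exists a basis $v_1, \ldots, v_n$ of $\mathbb{F}^n$ such that $v_i \in W_j$ if and only if $i \neq j$. -/
theorem stmt0 (F : Type*) [Field F] (n : ℕ) (hn : 1 ≤ n)
    (W : Fin n → Submodule F (Fin n → F))
    (hdim : ∀ i, Module.finrank F (W i) = n - 1)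
    (hinter : ⨅ i, W i = ⊥) :
    ∃ b : Module.Basis (Fin n) F (Fin n → F), ∀ i j, b i ∈ W j ↔ i ≠ j := by
  have hfr : Module.finrank F (Fin n → F) = n := by simp
  -- each W i is the kernel of a nonzero functional
  have hker : ∀ i, ∃ f : (Fin n → F) →ₗ[F] F, W i = LinearMap.ker f := by
    intro i
    have hlt : W i < ⊤ := by
      refine lt_top_iff_ne_top.2 fun h => ?_
      have := hdim i
      rw [h] at this
      simp [hfr] at this
      omega
    obtain ⟨f, hf0, hf⟩ := (W i).exists_dual_map_eq_bot_of_lt_top hlt inferInstance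
    refine ⟨f, ?_⟩
    have hle : W i ≤ LinearMap.ker f := by
      intro x hx
      have : f x ∈ Submodule.map f (W i) := ⟨x, hx, rfl⟩
      rw [hf] at this
      simpa using this
    have hkerdim : Module.finrank F (LinearMap.ker f) = n - 1 := by
      have hrange : LinearMap.range f = ⊤ := by
        rcases eq_bot_or_eq_top (LinearMap.range f) with h | h
        · exact absurd (LinearMap.range_eq_bot.1 h) hf0
        · exact h
      have := LinearMap.finrank_range_add_finrank_ker f
      rw [hrange, finrank_top, Module.finrank_self, hfr] at this
      omega
    exact Submodule.eq_of_le_of_finrank_eq hle (by rw [hdim i, hkerdim])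
  choose f hf using hker
  set Φ : (Fin n → F) →ₗ[F] (Fin n → F) := LinearMap.pi f with hΦ
  have hkerΦ : LinearMap.ker Φ = ⊥ := by
    rw [hΦ, LinearMap.ker_pi, ← hinter]
    exact le_antisymm (le_iInf fun i => (iInf_le _ i).trans (hf i).ge)
      (le_iInf fun i => (iInf_le _ i).trans (hf i).le)
  have hinj : Function.Injective Φ := LinearMap.ker_eq_bot.1 hkerΦ
  have hsurj : Function.Surjective Φ := (LinearMap.injective_iff_surjective).1 hinj
  let e := LinearEquiv.ofBijective Φ ⟨hinj, hsurj⟩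
  refine ⟨(Pi.basisFun F (Fin n)).map e.symm, fun i j => ?_⟩
  have hval : f j ((Pi.basisFun F (Fin n)).map e.symm i) = if j = i then 1 else 0 := by
    have : Φ (e.symm (Pi.basisFun F (Fin n) i)) = Pi.basisFun F (Fin n) i :=
      e.apply_symm_apply _
    have h2 := congrFun this j
    simpa [hΦ, LinearMap.pi_apply, Pi.basisFun_apply, Pi.single_apply] using h2
  rw [hf j, LinearMap.mem_ker, hval]
  constructor
  · intro h hij
    rw [hij] at h
    simp at h
  · intro h
    rw [if_neg (fun hji => h hji.symm)]
end

section
/- Let $E_1 \subseteq Gr(n, m_1)$ and $E_2 \subseteq Gr(n, m_2)$ be non-degenerate sets of subspaces of $\mathbb{F}_p^n$ with $m_1 + m_2 < n$. Then the set $E = \{W_1 + W_2 : W_1 \in E_1, W_2 \in E_2, W_1 \cap W_2 = 0\} \subseteq Gr(n, m_1 + m_2)$ is non-degenerate. -/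
open Module Submodule

lemma aux_exists_le {K M : Type*} [Field K] [AddCommGroup M] [Module K M]
    [FiniteDimensional K M] (V : Submodule K M) :
    ∀ k : ℕ, finrank K V ≤ k → k ≤ finrank K M → ∃ V₁, V ≤ V₁ ∧ finrank K V₁ = k := by
  intro k
  induction k with
  | zero =>
    intro h1 _
    exact ⟨V, le_rfl, Nat.le_zero.mp h1⟩
  | succ k ih =>
    intro h1 h2
    rcases Nat.lt_or_ge (finrank K V) (k+1) with h | h
    · obtain ⟨V₁, hle, hrank⟩ := ih (Nat.lt_succ_iff.mp h) (Nat.le_of_succ_le h2)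
      have hlt : finrank K V₁ < finrank K M := by omega
      obtain ⟨x, hx⟩ := V₁.exists_of_finrank_lt hlt
      have hxV : x ∉ V₁ := by simpa using hx 1 one_ne_zero
      have hx0 : x ≠ 0 := fun h => hxV (h ▸ V₁.zero_mem)
      refine ⟨V₁ ⊔ K ∙ x, hle.trans le_sup_left, ?_⟩
      have hdisj : V₁ ⊓ (K ∙ x) = ⊥ := by
        rw [← disjoint_iff]
        exact (Submodule.disjoint_span_singleton' hx0).mpr hxV
      have := Submodule.finrank_sup_add_finrank_inf_eq V₁ (K ∙ x)
      rw [hdisj, finrank_bot, finrank_span_singleton hx0] at this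
      omega
    · exact ⟨V, le_rfl, le_antisymm h1 h⟩

theorem stmt4 (p n m₁ m₂ : ℕ) (hp : p.Prime) (hmn : m₁ + m₂ < n)
    (E₁ E₂ : Set (Submodule (ZMod p) (Fin n → ZMod p)))
    (hE₁dim : ∀ W ∈ E₁, Module.finrank (ZMod p) W = m₁)
    (hE₂dim : ∀ W ∈ E₂, Module.finrank (ZMod p) W = m₂)
    (hE₁nd : ∀ V : Submodule (ZMod p) (Fin n → ZMod p),
      Module.finrank (ZMod p) V = n - m₁ → ∃ W ∈ E₁, W ⊓ V = ⊥)
    (hE₂nd : ∀ V : Submodule (ZMod p) (Fin n → ZMod p),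
      Module.finrank (ZMod p) V = n - m₂ → ∃ W ∈ E₂, W ⊓ V = ⊥) :
    ∀ V : Submodule (ZMod p) (Fin n → ZMod p),
      Module.finrank (ZMod p) V = n - (m₁ + m₂) →
      ∃ W₁ ∈ E₁, ∃ W₂ ∈ E₂, W₁ ⊓ W₂ = ⊥ ∧ (W₁ ⊔ W₂) ⊓ V = ⊥ := by
  haveI : Fact p.Prime := ⟨hp⟩
  intro V hV
  have htot : finrank (ZMod p) (Fin n → ZMod p) = n := by
    simp [Module.finrank_pi]
  -- extend V to V₁ of dim n - m₁
  obtain ⟨V₁, hVV₁, hV₁⟩ := aux_exists_le V (n - m₁) (by omega) (by omega)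
  obtain ⟨W₁, hW₁E, hW₁V₁⟩ := hE₁nd V₁ hV₁
  have hW₁dim := hE₁dim W₁ hW₁E
  have hW₁V : W₁ ⊓ V = ⊥ := by
    rw [eq_bot_iff] at hW₁V₁ ⊢
    exact le_trans (inf_le_inf_left _ hVV₁) hW₁V₁
  -- V₂ := W₁ ⊔ V has dim n - m₂
  have hV₂dim : finrank (ZMod p) ↥(W₁ ⊔ V) = n - m₂ := by
    have := Submodule.finrank_sup_add_finrank_inf_eq W₁ V
    rw [hW₁V, finrank_bot, hW₁dim, hV] at this
    omega
  obtain ⟨W₂, hW₂E, hW₂V₂⟩ := hE₂nd _ hV₂dim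
  refine ⟨W₁, hW₁E, W₂, hW₂E, ?_, ?_⟩
  · rw [eq_bot_iff] at hW₂V₂ ⊢
    intro x hx
    exact hW₂V₂ ⟨hx.2, le_sup_left (α := Submodule (ZMod p) (Fin n → ZMod p)) hx.1⟩
  · rw [eq_bot_iff]
    rintro x ⟨hxW, hxV⟩
    obtain ⟨w₁, hw₁, w₂, hw₂, rfl⟩ := Submodule.mem_sup.mp hxW
    have hw₂' : w₂ ∈ W₁ ⊔ V := by
      have : w₂ = (w₁ + w₂) - w₁ := by ring
      rw [this]
      exact Submodule.sub_mem _ (Submodule.mem_sup_right hxV) (Submodule.mem_sup_left hw₁)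
    have hw₂0 : w₂ = 0 := by
      have : w₂ ∈ W₂ ⊓ (W₁ ⊔ V) := ⟨hw₂, hw₂'⟩
      rwa [hW₂V₂, Submodule.mem_bot] at this
    subst hw₂0
    have : w₁ + 0 ∈ W₁ ⊓ V := ⟨by simpa using hw₁, hxV⟩
    rwa [hW₁V] at this
end

section
/- Let $E_1 \subseteq Gr(n, m_1)$ and $E_2 \subseteq Gr(n, m_2)$ be non-degenerate sets with $m_1 + m_2 < n$, and set $E = \{W_1 + W_2 : W_i \in E_i, W_1 \cap W_2 = 0\}$. Then $|E|^n \geq \max\{|E_1|, |E_2|\}$. -/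
open Module Submodule

section Aux

variable {K V : Type*} [Field K] [AddCommGroup V] [Module K V] [FiniteDimensional K V]

/-- Any subspace can be extended to one of any given larger finrank. -/
lemma extend_finrank (W : Submodule K V) (k : ℕ) (h1 : finrank K W ≤ k)
    (h2 : k ≤ finrank K V) : ∃ U : Submodule K V, W ≤ U ∧ finrank K U = k := by
  obtain ⟨d, hd⟩ : ∃ d, k - finrank K W = d := ⟨_, rfl⟩
  induction d generalizing W with
  | zero => exact ⟨W, le_rfl, by omega⟩
  | succ d ih =>
    have hWk : finrank K W < k := by omega
    have hWtop : W ≠ ⊤ := by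
      intro h
      rw [h, finrank_top] at hWk
      omega
    obtain ⟨x, hx⟩ : ∃ x, x ∉ W := by
      by_contra h
      push_neg at h
      exact hWtop (eq_top_iff.2 fun y _ => h y)
    have hxne : x ≠ 0 := fun h => hx (h ▸ W.zero_mem)
    have hlt : W < W ⊔ K ∙ x := by
      refine lt_of_le_of_ne le_sup_left fun h => hx ?_
      have : x ∈ W ⊔ K ∙ x := Submodule.mem_sup_right (mem_span_singleton_self x)
      rwa [← h] at this
    have hle1 : finrank K ↥(W ⊔ K ∙ x) ≤ finrank K W + 1 := by
      have := finrank_sup_add_finrank_inf_eq W (K ∙ x)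
      have h1' : finrank K ↥(K ∙ x) = 1 := finrank_span_singleton hxne
      omega
    have hgt : finrank K W < finrank K ↥(W ⊔ K ∙ x) :=
      Submodule.finrank_lt_finrank_of_lt hlt
    have heq : finrank K ↥(W ⊔ K ∙ x) = finrank K W + 1 := by omega
    obtain ⟨U, hU1, hU2⟩ := ih (W ⊔ K ∙ x) (by omega) (by omega)
    exact ⟨U, le_trans le_sup_left hU1, hU2⟩

end Aux

section Main

variable {p n : ℕ}

lemma aux_main (p n a b : ℕ) [Fact p.Prime] (hab : a + b < n)
    (A B Eset : Set (Submodule (ZMod p) (Fin n → ZMod p)))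
    (hAdim : ∀ W ∈ A, finrank (ZMod p) W = a)
    (hBdim : ∀ W ∈ B, finrank (ZMod p) W = b)
    (hBnd : ∀ V : Submodule (ZMod p) (Fin n → ZMod p),
      finrank (ZMod p) V = n - b → ∃ W ∈ B, W ⊓ V = ⊥)
    (hE : ∀ W₁ ∈ A, ∀ W₂ ∈ B, W₁ ⊓ W₂ = ⊥ → W₁ ⊔ W₂ ∈ Eset) :
    A.ncard ≤ Eset.ncard ^ n := by
  classical
  have hfr : finrank (ZMod p) (Fin n → ZMod p) = n := by simp
  -- Lemma A
  have lemA : ∀ W ∈ A, ∀ x : Fin n → ZMod p, x ∉ W →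
      ∃ U ∈ Eset, W ≤ U ∧ x ∉ U ∧ finrank (ZMod p) U ≤ a + b := by
    intro W hW x hx
    have hWa : finrank (ZMod p) W = a := hAdim W hW
    have hxne : x ≠ 0 := fun h => hx (h ▸ W.zero_mem)
    have hle1 : finrank (ZMod p) ↥(W ⊔ (ZMod p) ∙ x) ≤ a + 1 := by
      have := finrank_sup_add_finrank_inf_eq W ((ZMod p) ∙ x)
      have h1' : finrank (ZMod p) ↥((ZMod p) ∙ x) = 1 := finrank_span_singleton hxne
      omega
    obtain ⟨V, hV1, hV2⟩ := extend_finrank (W ⊔ (ZMod p) ∙ x) (n - b)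
      (by omega) (by omega)
    obtain ⟨W₂, hW₂B, hW₂V⟩ := hBnd V hV2
    have hWV : W ≤ V := le_trans le_sup_left hV1
    have hWW₂ : W ⊓ W₂ = ⊥ := by
      rw [eq_bot_iff]
      intro y hy
      have : y ∈ W₂ ⊓ V := ⟨hy.2, hWV hy.1⟩
      rw [hW₂V] at this
      exact this
    refine ⟨W ⊔ W₂, hE W hW W₂ hW₂B hWW₂, le_sup_left, ?_, ?_⟩
    · intro hxU
      obtain ⟨w, hw, w₂, hw₂, hsum⟩ := Submodule.mem_sup.1 hxU
      have hxV : x ∈ V := hV1 (Submodule.mem_sup_right (mem_span_singleton_self x))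
      have : w₂ ∈ W₂ ⊓ V := ⟨hw₂, by
        have : w₂ = x - w := by rw [← hsum]; ring
        rw [this]; exact V.sub_mem hxV (hWV hw)⟩
      rw [hW₂V] at this
      have hw₂0 : w₂ = 0 := this
      exact hx (by rw [← hsum, hw₂0, add_zero]; exact hw)
    · have := finrank_sup_add_finrank_inf_eq W W₂
      rw [hWW₂] at this
      simp only [finrank_bot, add_zero] at this
      rw [this, hWa, hBdim W₂ hW₂B]
  -- S : the set of U ∈ Eset containing W
  have key : ∀ W ∈ A, ∃ g : Fin n → Submodule (ZMod p) (Fin n → ZMod p),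
      (∀ i, g i ∈ Eset) ∧ (⨅ i, g i) = W := by
    intro W hW
    have hWa : finrank (ZMod p) W = a := hAdim W hW
    have han : a < n := by omega
    -- first element
    obtain ⟨x₀, hx₀⟩ : ∃ x : Fin n → ZMod p, x ∉ W := by
      by_contra h
      push_neg at h
      have : W = ⊤ := eq_top_iff.2 fun y _ => h y
      rw [this, finrank_top, hfr] at hWa
      omega
    -- induction producing finsets
    have Q : ∀ t : ℕ, ∃ F : Finset (Submodule (ZMod p) (Fin n → ZMod p)),
        (∀ U ∈ F, U ∈ Eset ∧ W ≤ U) ∧ F.Nonempty ∧ F.card ≤ t + 1 ∧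
        (finrank (ZMod p) ↥(F.inf id) ≤ a ∨ finrank (ZMod p) ↥(F.inf id) ≤ n - 1 - t) := by
      intro t
      induction t with
      | zero =>
        obtain ⟨U, hUE, hWU, _, hUr⟩ := lemA W hW x₀ hx₀
        refine ⟨{U}, ?_, ⟨U, Finset.mem_singleton_self U⟩, by rw [Finset.card_singleton], ?_⟩
        · intro U' hU'; rw [Finset.mem_singleton] at hU'; subst hU'; exact ⟨hUE, hWU⟩
        · right
          have hsing : ({U} : Finset (Submodule (ZMod p) (Fin n → ZMod p))).inf id = U :=
            Finset.inf_singleton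
          rw [hsing]
          omega
      | succ t ih =>
        obtain ⟨F, hFS, hFne, hFcard, hFr⟩ := ih
        by_cases hdone : finrank (ZMod p) ↥(F.inf id) ≤ a
        · exact ⟨F, hFS, hFne, by omega, Or.inl hdone⟩
        · push_neg at hdone
          have hWinf : W ≤ F.inf id := Finset.le_inf fun U hU => (hFS U hU).2
          obtain ⟨x, hxinf, hxW⟩ : ∃ x, x ∈ F.inf id ∧ x ∉ W := by
            by_contra h
            push_neg at h
            have hle : F.inf id ≤ W := fun y hy => h y hy
            have := Submodule.finrank_mono hle
            omega
          obtain ⟨U, hUE, hWU, hxU, hUr⟩ := lemA W hW x hxW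
          refine ⟨insert U F, ?_, ⟨U, Finset.mem_insert_self U F⟩, ?_, ?_⟩
          · intro U' hU'
            rcases Finset.mem_insert.1 hU' with h | h
            · subst h; exact ⟨hUE, hWU⟩
            · exact hFS U' h
          · have := Finset.card_insert_le U F; omega
          · right
            have hinf : (insert U F).inf id = U ⊓ F.inf id := by
              rw [Finset.inf_insert]; rfl
            have hlt : (insert U F).inf id < F.inf id := by
              rw [hinf]
              refine lt_of_le_of_ne inf_le_right fun h => hxU ?_
              have hx2 : x ∈ U ⊓ F.inf id := by rw [h]; exact hxinf
              exact hx2.1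
            have := Submodule.finrank_lt_finrank_of_lt hlt
            omega
    obtain ⟨F, hFS, hFne, hFcard, hFr⟩ := Q (n - 1)
    have hinfW : F.inf id = W := by
      have hWinf : W ≤ F.inf id := Finset.le_inf fun U hU => (hFS U hU).2
      have hra : finrank (ZMod p) ↥(F.inf id) ≤ a := by
        rcases hFr with h | h
        · exact h
        · omega
      exact (Submodule.eq_of_le_of_finrank_le hWinf (by omega)).symm
    -- build g from F.toList
    obtain ⟨u₀, hu₀⟩ := hFne
    have hlen : F.toList.length = F.card := Finset.length_toList F
    have hlenn : F.toList.length ≤ n := by omega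
    refine ⟨fun i => F.toList.getD i u₀, ?_, ?_⟩
    · intro i
      show F.toList.getD (↑i) u₀ ∈ Eset
      by_cases h : (i : ℕ) < F.toList.length
      · rw [List.getD_eq_getElem F.toList u₀ h]
        exact (hFS _ (Finset.mem_toList.1 (List.getElem_mem h))).1
      · rw [List.getD_eq_default F.toList u₀ (by omega)]
        exact (hFS u₀ hu₀).1
    · rw [← hinfW]
      apply le_antisymm
      · apply Finset.le_inf
        intro U hU
        obtain ⟨j, hj, hjl⟩ := List.mem_iff_getElem.1 (Finset.mem_toList.2 hU)
        have hjn : j < n := by omega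
        refine le_trans (iInf_le _ (⟨j, hjn⟩ : Fin n)) ?_
        show F.toList.getD j u₀ ≤ U
        rw [List.getD_eq_getElem F.toList u₀ (by omega), hjl]
      · apply le_iInf
        intro i
        show F.inf id ≤ F.toList.getD (↑i) u₀
        by_cases h : (i : ℕ) < F.toList.length
        · rw [List.getD_eq_getElem F.toList u₀ h]
          exact Finset.inf_le (Finset.mem_toList.1 (List.getElem_mem h))
        · rw [List.getD_eq_default F.toList u₀ (by omega)]
          exact Finset.inf_le hu₀
  -- counting
  haveI : Finite (Submodule (ZMod p) (Fin n → ZMod p)) :=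
    Finite.of_injective _ (SetLike.coe_injective (A := Submodule (ZMod p) (Fin n → ZMod p)))
  choose g hg1 hg2 using key
  let f : A → (Fin n → ↥Eset) := fun w i => ⟨g w w.2 i, hg1 w w.2 i⟩
  have hf : Function.Injective f := by
    intro w w' h
    have h2 : ∀ i, g w w.2 i = g w' w'.2 i := fun i =>
      congrArg Subtype.val (congrFun h i)
    have : (⨅ i, g w w.2 i) = ⨅ i, g w' w'.2 i := by
      exact iInf_congr h2
    ext1
    rw [← hg2 w w.2, ← hg2 w' w'.2, this]
  calc A.ncard = Nat.card A := (Nat.card_coe_set_eq A).symm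
    _ ≤ Nat.card (Fin n → ↥Eset) := Nat.card_le_card_of_injective f hf
    _ = Nat.card ↥Eset ^ n := by
        rw [Nat.card_pi]
        simp
    _ = Eset.ncard ^ n := by rw [Nat.card_coe_set_eq]

end Main

theorem stmt5 (p n m₁ m₂ : ℕ) (hp : p.Prime) (hmn : m₁ + m₂ < n)
    (E₁ E₂ : Set (Submodule (ZMod p) (Fin n → ZMod p)))
    (hE₁dim : ∀ W ∈ E₁, Module.finrank (ZMod p) W = m₁)
    (hE₂dim : ∀ W ∈ E₂, Module.finrank (ZMod p) W = m₂)
    (hE₁nd : ∀ V : Submodule (ZMod p) (Fin n → ZMod p),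
      Module.finrank (ZMod p) V = n - m₁ → ∃ W ∈ E₁, W ⊓ V = ⊥)
    (hE₂nd : ∀ V : Submodule (ZMod p) (Fin n → ZMod p),
      Module.finrank (ZMod p) V = n - m₂ → ∃ W ∈ E₂, W ⊓ V = ⊥) :
    max E₁.ncard E₂.ncard ≤
      ({U : Submodule (ZMod p) (Fin n → ZMod p) |
        ∃ W₁ ∈ E₁, ∃ W₂ ∈ E₂, W₁ ⊓ W₂ = ⊥ ∧ U = W₁ ⊔ W₂}.ncard) ^ n := by
  haveI : Fact p.Prime := ⟨hp⟩
  set Eset := {U : Submodule (ZMod p) (Fin n → ZMod p) |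
        ∃ W₁ ∈ E₁, ∃ W₂ ∈ E₂, W₁ ⊓ W₂ = ⊥ ∧ U = W₁ ⊔ W₂}
  refine max_le ?_ ?_
  · refine aux_main p n m₁ m₂ hmn E₁ E₂ Eset hE₁dim hE₂dim hE₂nd ?_
    intro W₁ h₁ W₂ h₂ hinf
    exact ⟨W₁, h₁, W₂, h₂, hinf, rfl⟩
  · refine aux_main p n m₂ m₁ (by omega) E₂ E₁ Eset hE₂dim hE₁dim hE₁nd ?_
    intro W₂ h₂ W₁ h₁ hinf
    exact ⟨W₁, h₁, W₂, h₂, by rw [inf_comm] at hinf; exact hinf, by rw [sup_comm]⟩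
end

section
/- Let $E_1 \subseteq Gr(n, m_1)$ and $E_2 \subseteq Gr(n, m_2)$ be non-degenerate sets of subspaces with $m_1 + m_2 > n$. Then the set $E = \{W_1 \cap W_2 : W_i \in E_i, \dim(W_1 \cap W_2) = m_1 + m_2 - n\}$ is non-degenerate in $Gr(n, m_1 + m_2 - n)$ and satisfies $|E|^n \geq \max\{|E_1|, |E_2|\}$. -/
open Module Submodule

variable {K V : Type*} [Field K] [AddCommGroup V] [Module K V] [FiniteDimensional K V]

/-- intermediate subspace of prescribed dimension -/
lemma my_mid (X Y : Submodule K V) (hXY : X ≤ Y) :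
    ∀ k, finrank K X ≤ k → k ≤ finrank K Y → ∃ Z, X ≤ Z ∧ Z ≤ Y ∧ finrank K Z = k := by
  intro k
  induction k with
  | zero => intro h1 _; exact ⟨X, le_rfl, hXY, Nat.le_zero.mp h1⟩
  | succ k ih =>
    intro h1 h2
    rcases Nat.lt_or_ge (finrank K X) (k+1) with h | h
    · obtain ⟨Z, hXZ, hZY, hZ⟩ := ih (Nat.lt_succ_iff.mp h) (Nat.le_of_succ_le h2)
      have hne : Z ≠ Y := by
        intro rfl'; rw [rfl'] at hZ; omega
      have hlt : Z < Y := lt_of_le_of_ne hZY hne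
      obtain ⟨v, hvY, hvZ⟩ := SetLike.exists_of_lt hlt
      refine ⟨Z ⊔ K ∙ v, le_trans hXZ le_sup_left, sup_le hZY ?_, ?_⟩
      · rwa [Submodule.span_singleton_le_iff_mem]
      · have hv0 : v ≠ 0 := by rintro rfl; exact hvZ (Submodule.zero_mem Z)
        have hle : finrank K ↥(Z ⊔ K ∙ v) ≤ k + 1 := by
          have := Submodule.finrank_sup_add_finrank_inf_eq Z (K ∙ v)
          rw [finrank_span_singleton hv0] at this
          omega
        have hgt : k < finrank K ↥(Z ⊔ K ∙ v) := by
          rw [← hZ]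
          exact Submodule.finrank_lt_finrank_of_lt
            (lt_of_le_of_ne le_sup_left (by
              intro hE
              exact hvZ (hE ▸ (le_sup_right : (K ∙ v) ≤ Z ⊔ K ∙ v) (Submodule.mem_span_singleton_self v))))
        omega
    · exact ⟨X, le_rfl, hXY, le_antisymm h1 h⟩

lemma my_suplist (E : Set (Submodule K V)) (W : Submodule K V)
    (h : ∀ X, X < W → ∃ U ∈ E, U ≤ W ∧ ¬ U ≤ X) :
    ∃ l : List (Submodule K V), l.length ≤ finrank K W ∧ (∀ U ∈ l, U ∈ E) ∧
      (∀ U ∈ l, U ≤ W) ∧ l.foldr (· ⊔ ·) ⊥ = W := by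
  suffices H : ∀ k (X : Submodule K V), X ≤ W → finrank K W ≤ finrank K X + k →
      ∃ l : List (Submodule K V), l.length ≤ k ∧ (∀ U ∈ l, U ∈ E) ∧
        (∀ U ∈ l, U ≤ W) ∧ X ⊔ l.foldr (· ⊔ ·) ⊥ = W by
    obtain ⟨l, h1, h2, h3, h4⟩ := H (finrank K W) ⊥ bot_le (by simp)
    exact ⟨l, h1, h2, h3, by rwa [bot_sup_eq] at h4⟩
  intro k
  induction k with
  | zero =>
    intro X hXW hfr
    refine ⟨[], by simp, by simp, by simp, ?_⟩
    simp only [List.foldr_nil, sup_bot_eq]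
    exact Submodule.eq_of_le_of_finrank_le hXW (by omega)
  | succ k ih =>
    intro X hXW hfr
    by_cases hXeq : X = W
    · exact ⟨[], by simp, by simp, by simp, by simp [hXeq]⟩
    · obtain ⟨U, hUE, hUW, hUX⟩ := h X (lt_of_le_of_ne hXW hXeq)
      have hlt : X < X ⊔ U := lt_of_le_of_ne le_sup_left (by
        intro hE; exact hUX (hE ▸ le_sup_right))
      have hfr' : finrank K W ≤ finrank K ↥(X ⊔ U) + k := by
        have := Submodule.finrank_lt_finrank_of_lt (t := X ⊔ U) hlt
        omega
      obtain ⟨l, h1, h2, h3, h4⟩ := ih (X ⊔ U) (sup_le hXW hUW) hfr'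
      refine ⟨U :: l, by simpa using h1, ?_, ?_, ?_⟩
      · intro Z hZ; rcases List.mem_cons.mp hZ with rfl | hZ
        · exact hUE
        · exact h2 Z hZ
      · intro Z hZ; rcases List.mem_cons.mp hZ with rfl | hZ
        · exact hUW
        · exact h3 Z hZ
      · rw [List.foldr_cons, ← sup_assoc]; exact h4

lemma my_key {n m₁ m₂ : ℕ} (hrank : finrank K V = n) (hmn : n < m₁ + m₂)
    (hm₂ : m₂ ≤ n)
    (E₂ : Set (Submodule K V)) (hE₂dim : ∀ W ∈ E₂, finrank K W = m₂)
    (hE₂nd : ∀ S : Submodule K V, finrank K S = n - m₂ → ∃ W ∈ E₂, W ⊓ S = ⊥)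
    (W₁ : Submodule K V) (hW₁ : finrank K W₁ = m₁)
    (S : Submodule K V) (hSle : S ≤ W₁) (hSd : finrank K S = n - m₂) :
    ∃ W₂ ∈ E₂, finrank K ↥(W₁ ⊓ W₂) = m₁ + m₂ - n ∧ (W₁ ⊓ W₂) ⊔ S = W₁ ∧
      (W₁ ⊓ W₂) ⊓ S = ⊥ := by
  obtain ⟨W₂, hW₂E, hW₂S⟩ := hE₂nd S hSd
  have hW₂ : finrank K W₂ = m₂ := hE₂dim W₂ hW₂E
  have hUS : (W₁ ⊓ W₂) ⊓ S = ⊥ := by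
    rw [← le_bot_iff, ← hW₂S]
    exact inf_le_inf_right S inf_le_right
  have hsum : finrank K ↥((W₁ ⊓ W₂) ⊔ S) = finrank K ↥(W₁ ⊓ W₂) + finrank K ↥S := by
    have := Submodule.finrank_sup_add_finrank_inf_eq (W₁ ⊓ W₂) S
    rw [hUS, finrank_bot] at this
    omega
  have hle : (W₁ ⊓ W₂) ⊔ S ≤ W₁ := sup_le inf_le_left hSle
  have hup : finrank K ↥(W₁ ⊓ W₂) ≤ m₁ + m₂ - n := by
    have h1 : finrank K ↥((W₁ ⊓ W₂) ⊔ S) ≤ m₁ := hW₁ ▸ Submodule.finrank_mono hle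
    omega
  have hlo : m₁ + m₂ - n ≤ finrank K ↥(W₁ ⊓ W₂) := by
    have h1 := Submodule.finrank_sup_add_finrank_inf_eq W₁ W₂
    have h2 : finrank K ↥(W₁ ⊔ W₂) ≤ n := hrank ▸ Submodule.finrank_le _
    omega
  have hdim : finrank K ↥(W₁ ⊓ W₂) = m₁ + m₂ - n := le_antisymm hup hlo
  refine ⟨W₂, hW₂E, hdim, ?_, hUS⟩
  refine Submodule.eq_of_le_of_finrank_le hle ?_
  rw [hsum, hdim, hSd, hW₁]
  omega

lemma my_foldr_le {l : List (Submodule K V)} {T : Submodule K V}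
    (h : ∀ U ∈ l, U ≤ T) : l.foldr (· ⊔ ·) ⊥ ≤ T := by
  induction l with
  | nil => simp
  | cons a l ih =>
    simp only [List.foldr_cons]
    exact sup_le (h a List.mem_cons_self) (ih fun U hU => h U (List.mem_cons_of_mem a hU))

lemma my_count [Finite V] {n : ℕ} (E₁ E : Set (Submodule K V)) (hrank : finrank K V = n)
    (hbot : (⊥ : Submodule K V) ∉ E₁)
    (hstep : ∀ W ∈ E₁, ∀ X : Submodule K V, X < W → ∃ U ∈ E, U ≤ W ∧ ¬ U ≤ X) :
    E₁.ncard ≤ E.ncard ^ n := by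
  haveI : Finite (Submodule K V) :=
    Finite.of_injective _ (SetLike.coe_injective (A := Submodule K V))
  have key : ∀ W : Submodule K V, W ∈ E₁ →
      ∃ f : Fin n → ↥E, (⨆ i, (f i : Submodule K V)) = W := by
    intro W hW
    obtain ⟨l, hlen, hmemE, hleW, hsup⟩ := my_suplist E W (hstep W hW)
    have hlen' : l.length ≤ n := hlen.trans (hrank ▸ Submodule.finrank_le W)
    have hne : l ≠ [] := by
      rintro rfl
      simp only [List.foldr_nil] at hsup
      exact hbot (hsup ▸ hW)
    have hhead := List.head_mem hne
    have hgmem : ∀ i : ℕ, l.getD i (l.head hne) ∈ l := by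
      intro i
      rcases Nat.lt_or_ge i l.length with hi | hi
      · rw [List.getD_eq_getElem _ _ hi]; exact List.getElem_mem hi
      · rw [List.getD_eq_default _ _ hi]; exact hhead
    refine ⟨fun i => ⟨l.getD i (l.head hne), hmemE _ (hgmem i)⟩, ?_⟩
    apply le_antisymm
    · exact iSup_le fun i => hleW _ (hgmem i)
    · rw [← hsup]
      apply my_foldr_le
      intro U hU
      obtain ⟨j, hj, rfl⟩ := List.mem_iff_getElem.mp hU
      have hjn : j < n := lt_of_lt_of_le hj hlen'
      have : l[j] = l.getD (↑(⟨j, hjn⟩ : Fin n)) (l.head hne) :=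
        (List.getD_eq_getElem _ _ hj).symm
      rw [this]
      exact le_iSup (fun i : Fin n => (l.getD (↑i) (l.head hne) : Submodule K V)) ⟨j, hjn⟩
  choose f hf using key
  have hinj : Function.Injective (fun W : ↥E₁ => f W W.2) := by
    intro W W' hWW'
    have h2 : f W.1 W.2 = f W'.1 W'.2 := hWW'
    apply Subtype.ext
    rw [← hf W.1 W.2, ← hf W'.1 W'.2, h2]
  have hfin : Nat.card (Fin n) = n := by
    rw [Nat.card_eq_fintype_card, Fintype.card_fin]
  calc E₁.ncard = Nat.card ↥E₁ := (Nat.card_coe_set_eq E₁).symm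
    _ ≤ Nat.card (Fin n → ↥E) := Nat.card_le_card_of_injective _ hinj
    _ = Nat.card ↥E ^ n := by rw [Nat.card_fun, hfin]
    _ = E.ncard ^ n := by rw [Nat.card_coe_set_eq]
theorem stmt6 (p n m₁ m₂ : ℕ) (hp : p.Prime) (hmn : n < m₁ + m₂)
    (hm₁ : m₁ ≤ n) (hm₂ : m₂ ≤ n)
    (E₁ E₂ : Set (Submodule (ZMod p) (Fin n → ZMod p)))
    (hE₁dim : ∀ W ∈ E₁, Module.finrank (ZMod p) W = m₁)
    (hE₂dim : ∀ W ∈ E₂, Module.finrank (ZMod p) W = m₂)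
    (hE₁nd : ∀ V : Submodule (ZMod p) (Fin n → ZMod p),
      Module.finrank (ZMod p) V = n - m₁ → ∃ W ∈ E₁, W ⊓ V = ⊥)
    (hE₂nd : ∀ V : Submodule (ZMod p) (Fin n → ZMod p),
      Module.finrank (ZMod p) V = n - m₂ → ∃ W ∈ E₂, W ⊓ V = ⊥) :
    (∀ V : Submodule (ZMod p) (Fin n → ZMod p),
      Module.finrank (ZMod p) V = n - (m₁ + m₂ - n) →
      ∃ W₁ ∈ E₁, ∃ W₂ ∈ E₂,
        Module.finrank (ZMod p) ((W₁ ⊓ W₂ : Submodule (ZMod p) (Fin n → ZMod p)))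
          = m₁ + m₂ - n ∧ (W₁ ⊓ W₂) ⊓ V = ⊥) ∧
    max E₁.ncard E₂.ncard ≤
      ({U : Submodule (ZMod p) (Fin n → ZMod p) |
        ∃ W₁ ∈ E₁, ∃ W₂ ∈ E₂,
          Module.finrank (ZMod p) ((W₁ ⊓ W₂ : Submodule (ZMod p) (Fin n → ZMod p)))
            = m₁ + m₂ - n ∧ U = W₁ ⊓ W₂}.ncard) ^ n := by
  haveI : Fact p.Prime := ⟨hp⟩
  have hrank : Module.finrank (ZMod p) (Fin n → ZMod p) = n := Module.finrank_fin_fun (ZMod p)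
  set E : Set (Submodule (ZMod p) (Fin n → ZMod p)) :=
    {U : Submodule (ZMod p) (Fin n → ZMod p) | ∃ W₁ ∈ E₁, ∃ W₂ ∈ E₂,
      Module.finrank (ZMod p) ((W₁ ⊓ W₂ : Submodule (ZMod p) (Fin n → ZMod p))) = m₁ + m₂ - n ∧ U = W₁ ⊓ W₂} with hE
  constructor
  · -- Part 1: non-degeneracy
    intro V hV
    obtain ⟨V₁, -, hV₁V, hV₁d⟩ := my_mid (⊥ : Submodule (ZMod p) (Fin n → ZMod p)) V bot_le (n - m₁)
      (by simp) (by rw [hV]; omega)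
    obtain ⟨W₁, hW₁E, hW₁V₁⟩ := hE₁nd V₁ hV₁d
    have hW₁d : Module.finrank (ZMod p) W₁ = m₁ := hE₁dim W₁ hW₁E
    -- finrank (W₁ ⊓ V) ≤ n - m₂
    have hWV : Module.finrank (ZMod p) ↥(W₁ ⊓ V) ≤ n - m₂ := by
      have h0 : (W₁ ⊓ V) ⊓ V₁ = ⊥ := by
        rw [← le_bot_iff, ← hW₁V₁]
        exact inf_le_inf_right V₁ inf_le_left
      have h1 := Submodule.finrank_sup_add_finrank_inf_eq (W₁ ⊓ V) V₁
      rw [h0, finrank_bot, hV₁d] at h1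
      have h2 : Module.finrank (ZMod p) ↥((W₁ ⊓ V) ⊔ V₁) ≤ n - (m₁ + m₂ - n) := by
        rw [← hV]; exact Submodule.finrank_mono (sup_le inf_le_right hV₁V)
      omega
    obtain ⟨S, hWVS, hSW₁, hSd⟩ := my_mid (W₁ ⊓ V) W₁ inf_le_left (n - m₂) hWV
      (by rw [hW₁d]; omega)
    obtain ⟨W₂, hW₂E, hdim, hsup, hinf⟩ := my_key hrank hmn hm₂ E₂ hE₂dim hE₂nd W₁ hW₁d S hSW₁ hSd
    refine ⟨W₁, hW₁E, W₂, hW₂E, hdim, ?_⟩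
    rw [← le_bot_iff, ← hinf]
    refine le_inf inf_le_left ?_
    exact le_trans (le_inf (le_trans inf_le_left inf_le_left) inf_le_right) hWVS
  · -- Part 2: cardinality
    haveI : NeZero p := ⟨hp.pos.ne'⟩
    have hm₁pos : 1 ≤ m₁ := by omega
    have hm₂pos : 1 ≤ m₂ := by omega
    have hd_pos : 1 ≤ m₁ + m₂ - n := by omega
    -- generic step producer
    have step : ∀ (W : Submodule (ZMod p) (Fin n → ZMod p)), Module.finrank (ZMod p) W = m₁ →
        ∀ X : Submodule (ZMod p) (Fin n → ZMod p), X < W → ∃ W₂ ∈ E₂,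
          Module.finrank (ZMod p) ↥(W ⊓ W₂) = m₁ + m₂ - n ∧ W ⊓ W₂ ≤ W ∧ ¬ W ⊓ W₂ ≤ X := by
      intro W hWd X hXW
      rcases le_or_gt (n - m₂) (Module.finrank (ZMod p) X) with hc | hc
      · obtain ⟨S, -, hSX, hSd⟩ := my_mid (⊥ : Submodule (ZMod p) (Fin n → ZMod p)) X bot_le (n - m₂) (by simp) hc
        obtain ⟨W₂, hW₂E, hdim, hsup, hinf⟩ := my_key hrank hmn hm₂ E₂ hE₂dim hE₂nd W hWd S
          (hSX.trans hXW.le) hSd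
        refine ⟨W₂, hW₂E, hdim, inf_le_left, fun hle => ?_⟩
        exact absurd (hsup ▸ sup_le hle hSX : W ≤ X) (not_le_of_gt hXW)
      · obtain ⟨S, hXS, hSW, hSd⟩ := my_mid X W hXW.le (n - m₂) hc.le (by rw [hWd]; omega)
        obtain ⟨W₂, hW₂E, hdim, hsup, hinf⟩ := my_key hrank hmn hm₂ E₂ hE₂dim hE₂nd W hWd S hSW hSd
        refine ⟨W₂, hW₂E, hdim, inf_le_left, fun hle => ?_⟩
        have : W ⊓ W₂ = ⊥ := by
          rw [← le_bot_iff, ← hinf]; exact le_inf le_rfl (hle.trans hXS)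
        rw [this, finrank_bot] at hdim
        omega
    have step' : ∀ (W : Submodule (ZMod p) (Fin n → ZMod p)), Module.finrank (ZMod p) W = m₂ →
        ∀ X : Submodule (ZMod p) (Fin n → ZMod p), X < W → ∃ W₁ ∈ E₁,
          Module.finrank (ZMod p) ↥(W₁ ⊓ W) = m₁ + m₂ - n ∧ W₁ ⊓ W ≤ W ∧ ¬ W₁ ⊓ W ≤ X := by
      intro W hWd X hXW
      have hmn' : n < m₂ + m₁ := by omega
      rcases le_or_gt (n - m₁) (Module.finrank (ZMod p) X) with hc | hc
      · obtain ⟨S, -, hSX, hSd⟩ := my_mid (⊥ : Submodule (ZMod p) (Fin n → ZMod p)) X bot_le (n - m₁) (by simp) hc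
        obtain ⟨W₁, hW₁E, hdim, hsup, hinf⟩ := my_key hrank hmn' hm₁ E₁ hE₁dim hE₁nd W hWd S
          (hSX.trans hXW.le) hSd
        rw [inf_comm W W₁] at hdim hsup hinf
        refine ⟨W₁, hW₁E, by rw [hdim]; omega, inf_le_right, fun hle => ?_⟩
        exact absurd (hsup ▸ sup_le hle hSX : W ≤ X) (not_le_of_gt hXW)
      · obtain ⟨S, hXS, hSW, hSd⟩ := my_mid X W hXW.le (n - m₁) hc.le (by rw [hWd]; omega)
        obtain ⟨W₁, hW₁E, hdim, hsup, hinf⟩ := my_key hrank hmn' hm₁ E₁ hE₁dim hE₁nd W hWd S hSW hSd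
        rw [inf_comm W W₁] at hdim hsup hinf
        refine ⟨W₁, hW₁E, by rw [hdim]; omega, inf_le_right, fun hle => ?_⟩
        have : W₁ ⊓ W = ⊥ := by
          rw [← le_bot_iff, ← hinf]; exact le_inf le_rfl (hle.trans hXS)
        rw [this, finrank_bot] at hdim
        omega
    have hbot₁ : (⊥ : Submodule (ZMod p) (Fin n → ZMod p)) ∉ E₁ := fun h => by
      have := hE₁dim ⊥ h; rw [finrank_bot] at this; omega
    have hbot₂ : (⊥ : Submodule (ZMod p) (Fin n → ZMod p)) ∉ E₂ := fun h => by
      have := hE₂dim ⊥ h; rw [finrank_bot] at this; omega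
    apply max_le
    · apply my_count E₁ E hrank hbot₁
      intro W hW X hXW
      obtain ⟨W₂, hW₂E, hdim, hle, hnle⟩ := step W (hE₁dim W hW) X hXW
      exact ⟨W ⊓ W₂, ⟨W, hW, W₂, hW₂E, hdim, rfl⟩, hle, hnle⟩
    · apply my_count E₂ E hrank hbot₂
      intro W hW X hXW
      obtain ⟨W₁, hW₁E, hdim, hle, hnle⟩ := step' W (hE₂dim W hW) X hXW
      exact ⟨W₁ ⊓ W, ⟨W₁, hW₁E, W, hW, hdim, rfl⟩, hle, hnle⟩
end

section
/- Let $E_1$ be a non-degenerate subset of $Gr(n, m_1)$ and $E_2$ a non-degenerate subset of $Gr(n, m_2)$ with $m_1 + m_2 < n$. Then for every $W_1 \in E_1$ one has $W_1 = \bigcap \{W_1 + W_2 : W_2 \in E_2, \ W_1 \cap W_2 = 0\}$. -/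
open Module

lemma aux_extend {K V : Type*} [Field K] [AddCommGroup V] [Module K V]
    [FiniteDimensional K V] (k : ℕ) (hk : k ≤ finrank K V) :
    ∀ W : Submodule K V, finrank K W ≤ k → ∃ U, W ≤ U ∧ finrank K U = k := by
  suffices h : ∀ (d : ℕ) (W : Submodule K V), finrank K W ≤ k →
      k - finrank K W = d → ∃ U, W ≤ U ∧ finrank K U = k by
    intro W hW
    exact h _ W hW rfl
  intro d
  induction d with
  | zero =>
    intro W hW hd
    exact ⟨W, le_refl _, le_antisymm hW (by omega)⟩
  | succ d ih =>
    intro W hW hd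
    have hlt : finrank K W < k := by omega
    have hne : W ≠ ⊤ := by
      intro h
      rw [h, finrank_top] at hlt
      omega
    obtain ⟨x, hx⟩ : ∃ x, x ∉ W := by
      by_contra h
      push_neg at h
      exact hne (Submodule.eq_top_iff'.mpr h)
    set W' := W ⊔ Submodule.span K {x} with hW'
    have h1 : finrank K W < finrank K W' :=
      Submodule.finrank_lt_finrank_of_lt
        (lt_of_le_of_ne le_sup_left (by
          intro h
          exact hx (h ▸ Submodule.mem_sup_right (Submodule.mem_span_singleton_self x))))
    have h2 : finrank K W' ≤ finrank K W + 1 := by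
      have h3 : finrank K W' + finrank K ↥(W ⊓ Submodule.span K {x}) =
          finrank K W + finrank K (Submodule.span K {x}) := by
        rw [hW']; exact Submodule.finrank_sup_add_finrank_inf_eq W (Submodule.span K {x})
      have hs : finrank K (Submodule.span K {x}) ≤ 1 :=
        by
        by_cases hx0 : x = 0
        · rw [hx0, Submodule.span_zero_singleton, finrank_bot]; omega
        · rw [show (Submodule.span K {x}) = K ∙ x from rfl, finrank_span_singleton hx0]
      omega
    have heq : finrank K W' = finrank K W + 1 := by omega
    obtain ⟨U, hU1, hU2⟩ := ih W' (by omega) (by omega)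
    exact ⟨U, le_trans le_sup_left hU1, hU2⟩

theorem stmt7 (p n m₁ m₂ : ℕ) (hp : p.Prime) (hmn : m₁ + m₂ < n)
    (E₁ E₂ : Set (Submodule (ZMod p) (Fin n → ZMod p)))
    (hE₁dim : ∀ W ∈ E₁, Module.finrank (ZMod p) W = m₁)
    (hE₂dim : ∀ W ∈ E₂, Module.finrank (ZMod p) W = m₂)
    (hE₁nd : ∀ V : Submodule (ZMod p) (Fin n → ZMod p),
      Module.finrank (ZMod p) V = n - m₁ → ∃ W ∈ E₁, W ⊓ V = ⊥)
    (hE₂nd : ∀ V : Submodule (ZMod p) (Fin n → ZMod p),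
      Module.finrank (ZMod p) V = n - m₂ → ∃ W ∈ E₂, W ⊓ V = ⊥)
    (W₁ : Submodule (ZMod p) (Fin n → ZMod p)) (hW₁ : W₁ ∈ E₁) :
    W₁ = sInf {U : Submodule (ZMod p) (Fin n → ZMod p) |
      ∃ W₂ ∈ E₂, W₁ ⊓ W₂ = ⊥ ∧ U = W₁ ⊔ W₂} := by
  haveI : Fact p.Prime := ⟨hp⟩
  have hfr : finrank (ZMod p) (Fin n → ZMod p) = n := by
    simp [finrank_pi]
  apply le_antisymm
  · apply le_sInf
    rintro U ⟨W₂, _, _, rfl⟩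
    exact le_sup_left
  · intro x hx
    by_contra hxW
    -- extend W₁ ⊔ span x to dimension n - m₂
    have hdimW₁ : finrank (ZMod p) W₁ = m₁ := hE₁dim W₁ hW₁
    set W' := W₁ ⊔ Submodule.span (ZMod p) {x} with hW'
    have h2 : finrank (ZMod p) W' ≤ m₁ + 1 := by
      have h3 : finrank (ZMod p) W' + finrank (ZMod p) ↥(W₁ ⊓ Submodule.span (ZMod p) {x}) =
          finrank (ZMod p) W₁ + finrank (ZMod p) (Submodule.span (ZMod p) {x}) := by
        rw [hW']
        exact Submodule.finrank_sup_add_finrank_inf_eq W₁ (Submodule.span (ZMod p) {x})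
      have hs : finrank (ZMod p) (Submodule.span (ZMod p) {x}) ≤ 1 := by
        by_cases hx0 : x = 0
        · rw [hx0, Submodule.span_zero_singleton, finrank_bot]; omega
        · rw [show (Submodule.span (ZMod p) {x}) = (ZMod p) ∙ x from rfl,
            finrank_span_singleton hx0]
      omega
    obtain ⟨V, hVle, hVdim⟩ := aux_extend (n - m₂) (by omega) W' (by omega)
    obtain ⟨W₂, hW₂E, hW₂V⟩ := hE₂nd V hVdim
    have hdisj : W₁ ⊓ W₂ = ⊥ := by
      rw [← le_bot_iff, ← hW₂V]
      intro y hy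
      exact ⟨hy.2, hVle (Submodule.mem_sup_left hy.1)⟩
    have hxmem : x ∈ sInf {U : Submodule (ZMod p) (Fin n → ZMod p) |
      ∃ W₂ ∈ E₂, W₁ ⊓ W₂ = ⊥ ∧ U = W₁ ⊔ W₂} := hx
    have hxU : x ∈ W₁ ⊔ W₂ :=
      Submodule.mem_sInf.mp hxmem _ ⟨W₂, hW₂E, hdisj, rfl⟩
    obtain ⟨a, ha, b, hb, hab⟩ := Submodule.mem_sup.mp hxU
    have hbV : b ∈ V := by
      have hxV : x ∈ V := hVle (Submodule.mem_sup_right (Submodule.mem_span_singleton_self x))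
      have haV : a ∈ V := hVle (Submodule.mem_sup_left ha)
      have : b = x - a := by rw [← hab]; ring
      rw [this]
      exact V.sub_mem hxV haV
    have : b ∈ W₂ ⊓ V := ⟨hb, hbV⟩
    rw [hW₂V] at this
    simp at this
    subst this
    rw [add_zero] at hab
    exact hxW (hab ▸ ha)
end

section
/- For integers $m, m' \geq 1$ with $m + m' \leq n$ and any subspace $V \in Gr(n, m')$ of $\mathbb{F}_p^n$, the number of $m$-dimensional subspaces $W$ with $W \cap V \neq 0$ is at most $C \cdot p^{m' - 1 + (m-1)(n-m)}$ for an absolute constant $C$ depending only on $n$ (e.g., $C = 2^n$ suffices). -/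
open Module

section Aux

variable {K M : Type*} [Field K] [AddCommGroup M] [Module K M]

/-- GL acts transitively on nonzero vectors of a finite-dimensional vector space. -/
theorem aux_exists_equiv [FiniteDimensional K M] {v v' : M} (hv : v ≠ 0) (hv' : v' ≠ 0) :
    ∃ g : M ≃ₗ[K] M, g v = v' := by
  classical
  have h1 : LinearIndepOn K id {v} := LinearIndepOn.singleton (R := K) (v := id) hv
  have h2 : LinearIndepOn K id {v'} := LinearIndepOn.singleton (R := K) (v := id) hv'
  have hm1 : v ∈ h1.extend (Set.subset_univ _) := h1.subset_extend _ rfl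
  have hm2 : v' ∈ h2.extend (Set.subset_univ _) := h2.subset_extend _ rfl
  let B1 := Basis.extend h1
  let B2 := Basis.extend h2
  let e0 := B1.indexEquiv B2
  let e := e0.trans (Equiv.swap (e0 ⟨v, hm1⟩) ⟨v', hm2⟩)
  refine ⟨B1.equiv B2 e, ?_⟩
  have h3 : B1 ⟨v, hm1⟩ = v := Basis.extend_apply_self h1 ⟨v, hm1⟩
  have h4 : B2 ⟨v', hm2⟩ = v' := Basis.extend_apply_self h2 ⟨v', hm2⟩
  have h5 : (B1.equiv B2 e) (B1 ⟨v, hm1⟩) = B2 (e ⟨v, hm1⟩) := B1.equiv_apply _ _ _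
  have h6 : e ⟨v, hm1⟩ = ⟨v', hm2⟩ := by
    show (e0.trans (Equiv.swap (e0 ⟨v, hm1⟩) ⟨v', hm2⟩)) ⟨v, hm1⟩ = _
    rw [Equiv.trans_apply, Equiv.swap_apply_left]
  rw [h3, h6, h4] at h5
  exact h5

/-- Decomposition of the count of linearly independent tuples whose first entry satisfies a
predicate `P`, as (number of admissible nonzero first vectors) times (number of tuples with a
fixed first vector). -/
theorem aux_card_eq [FiniteDimensional K M] (P : M → Prop) (k : ℕ) {v₀ : M} (hv₀ : v₀ ≠ 0) :
    Nat.card {s : Fin (k+1) → M // LinearIndependent K s ∧ P (s 0)} =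
      Nat.card {v : M // P v ∧ v ≠ 0} *
        Nat.card {s : Fin (k+1) → M // LinearIndependent K s ∧ s 0 = v₀} := by
  classical
  have H : ∀ v : M, ∃ g : M ≃ₗ[K] M, v ≠ 0 → g v₀ = v := by
    intro v
    by_cases h : v = 0
    · exact ⟨LinearEquiv.refl K M, fun hv => absurd h hv⟩
    · obtain ⟨g, hg⟩ := aux_exists_equiv (K := K) hv₀ h
      exact ⟨g, fun _ => hg⟩
  choose g hg using H
  rw [← Nat.card_prod]
  refine Nat.card_congr ?_
  refine
    { toFun := fun s =>
        (⟨s.1 0, s.2.2, s.2.1.ne_zero 0⟩,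
         ⟨⇑(g (s.1 0)).symm ∘ s.1,
          ((g (s.1 0)).symm.toLinearMap.linearIndependent_iff
            (LinearMap.ker_eq_bot.2 (g (s.1 0)).symm.injective)).2 s.2.1,
          (LinearEquiv.symm_apply_eq _).2 (hg (s.1 0) (s.2.1.ne_zero 0)).symm⟩)
      invFun := fun vs =>
        ⟨⇑(g vs.1.1) ∘ vs.2.1,
         ((g vs.1.1).toLinearMap.linearIndependent_iff
            (LinearMap.ker_eq_bot.2 (g vs.1.1).injective)).2 vs.2.2.1, ?_⟩
      left_inv := ?_
      right_inv := ?_ }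
  · show P ((g vs.1.1) (vs.2.1 0))
    rw [vs.2.2.2, hg vs.1.1 vs.1.2.2]
    exact vs.1.2.1
  · intro s
    apply Subtype.ext
    funext i
    simp
  · rintro ⟨⟨v, hPv, hv⟩, ⟨s, hsLI, hs0⟩⟩
    have h0 : (⇑(g v) ∘ s) 0 = v := by
      simp only [Function.comp_apply, hs0]
      exact hg v hv
    refine Prod.ext (Subtype.ext h0) (Subtype.ext ?_)
    simp only [h0]
    funext i
    simp

end Aux

section Aux2

variable {K M : Type*} [Field K] [AddCommGroup M] [Module K M]

theorem aux_card_ne_zero [Finite M] : Nat.card {v : M // v ≠ 0} = Nat.card M - 1 := by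
  classical
  letI : Fintype M := Fintype.ofFinite M
  rw [Nat.card_eq_fintype_card, Nat.card_eq_fintype_card]
  have : Fintype.card {v : M // ¬ v = 0} = Fintype.card M - Fintype.card {v : M // v = 0} :=
    Fintype.card_subtype_compl _
  rw [Fintype.card_subtype_eq] at this
  exact this

theorem aux_card_mem_ne_zero [Finite M] (W : Submodule K M) :
    Nat.card {v : M // v ∈ W ∧ v ≠ 0} = Nat.card ↥W - 1 := by
  have e : {v : M // v ∈ W ∧ v ≠ 0} ≃ {v : ↥W // v ≠ 0} :=
    { toFun := fun v => ⟨⟨v.1, v.2.1⟩, fun h => v.2.2 (congrArg Subtype.val h)⟩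
      invFun := fun w => ⟨w.1.1, w.1.2, fun h => w.2 (Subtype.ext h)⟩
      left_inv := fun _ => rfl
      right_inv := fun _ => rfl }
  rw [Nat.card_congr e, aux_card_ne_zero]

/-- The fiber of tuples spanning a fixed `W` is equivalent to tuples of elements of `W`. -/
theorem aux_fiber_equiv (P : M → Prop) (k : ℕ) (W : Submodule K M)
    (hrank : finrank K ↥W = k + 1) :
    Nonempty ({b : Fin (k+1) → M // (LinearIndependent K b ∧ P (b 0)) ∧
        Submodule.span K (Set.range b) = W} ≃
      {s : Fin (k+1) → ↥W // LinearIndependent K s ∧ P ↑(s 0)}) := by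
  classical
  refine ⟨⟨fun b => ⟨fun i => ⟨b.1 i, (le_of_eq b.2.2) (Submodule.subset_span (Set.mem_range_self i))⟩, LinearIndependent.of_comp W.subtype b.2.1.1, b.2.1.2⟩, fun s => ⟨fun i => ↑(s.1 i), ⟨?_, s.2.2⟩, ?_⟩, ?_, ?_⟩⟩
  · exact (W.subtype.linearIndependent_iff W.ker_subtype).2 s.2.1
  · have h1 : Submodule.span K (Set.range s.1) = ⊤ :=
      s.2.1.span_eq_top_of_card_eq_finrank (by simp [hrank])
    have h2 : (fun i => (↑(s.1 i) : M)) = ⇑W.subtype ∘ s.1 := rfl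
    rw [h2, Set.range_comp, Submodule.span_image, h1, Submodule.map_subtype_top]
  · intro b
    apply Subtype.ext
    rfl
  · intro s
    apply Subtype.ext
    funext i
    apply Subtype.ext
    rfl

end Aux2

theorem aux_arith {p n m' k : ℕ} (hp : 2 ≤ p) (hm' : 1 ≤ m') (hmn : (k+1) + m' ≤ n) :
    (p ^ (k+1) - 1) * ((p ^ m' - 1) * (2 ^ (k+1) * p ^ ((k+1) * (n - (k+1))))) ≤
      2 ^ n * p ^ (m' - 1 + k * (n - (k+1))) * ((p - 1) * ((p ^ n - 1))) := by
  have hA : (p ^ (k+1) - 1) * p ^ (n - (k+1)) ≤ p ^ n - 1 := by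
    rw [Nat.sub_mul, one_mul, ← pow_add]
    have h1 : k + 1 + (n - (k+1)) = n := by omega
    rw [h1]
    have h2 : 1 ≤ p ^ (n - (k+1)) := Nat.one_le_pow _ _ (by omega)
    omega
  have hB : p ^ m' - 1 ≤ 2 * p ^ (m' - 1) * (p - 1) := by
    have h1 : p ^ m' = p ^ (m' - 1) * p := by
      rw [← pow_succ]
      congr 1
      omega
    have h3 : 2 * p ^ (m' - 1) * (p - 1) = 2 * (p ^ (m' - 1) * p) - 2 * p ^ (m' - 1) := by
      rw [Nat.mul_sub, mul_one, mul_assoc]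
    rw [h1, h3]
    have h4 : 2 * p ^ (m' - 1) ≤ p ^ (m' - 1) * p := by
      calc 2 * p ^ (m' - 1) = p ^ (m' - 1) * 2 := by ring
      _ ≤ p ^ (m' - 1) * p := Nat.mul_le_mul_left _ hp
    have h2 : 1 ≤ p ^ (m' - 1) := Nat.one_le_pow _ _ (by omega)
    omega
  have hC : (k+1) * (n - (k+1)) = (n - (k+1)) + k * (n - (k+1)) := by ring
  calc (p ^ (k+1) - 1) * ((p ^ m' - 1) * (2 ^ (k+1) * p ^ ((k+1) * (n - (k+1)))))
      = 2 ^ (k+1) * ((p ^ m' - 1) * (((p ^ (k+1) - 1) * p ^ (n - (k+1))) *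
          p ^ (k * (n - (k+1))))) := by rw [hC, pow_add]; ring
    _ ≤ 2 ^ (k+1) * ((2 * p ^ (m' - 1) * (p - 1)) * ((p ^ n - 1) *
          p ^ (k * (n - (k+1))))) := by
          exact Nat.mul_le_mul_left _ (Nat.mul_le_mul hB (Nat.mul_le_mul_right _ hA))
    _ = (2 ^ (k+1) * 2) * p ^ (m' - 1 + k * (n - (k+1))) * ((p - 1) * (p ^ n - 1)) := by
          rw [pow_add]; ring
    _ ≤ 2 ^ n * p ^ (m' - 1 + k * (n - (k+1))) * ((p - 1) * (p ^ n - 1)) := by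
          refine Nat.mul_le_mul_right _ (Nat.mul_le_mul_right _ ?_)
          rw [← pow_succ]
          exact Nat.pow_le_pow_right (by omega) (by omega)

theorem stmt8 (p n m m' : ℕ) (hp : p.Prime) (hm : 1 ≤ m) (hm' : 1 ≤ m')
    (hmn : m + m' ≤ n)
    (V : Submodule (ZMod p) (Fin n → ZMod p))
    (hV : Module.finrank (ZMod p) V = m') :
    {W : Submodule (ZMod p) (Fin n → ZMod p) |
        Module.finrank (ZMod p) W = m ∧ W ⊓ V ≠ ⊥}.ncard ≤
      2 ^ n * p ^ (m' - 1 + (m - 1) * (n - m)) := by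
  classical
  haveI : Fact p.Prime := ⟨hp⟩
  have hp2 : 2 ≤ p := hp.two_le
  obtain ⟨k, rfl⟩ : ∃ k, m = k + 1 := ⟨m - 1, by omega⟩
  rw [Nat.add_sub_cancel]
  have hcardK : Fintype.card (ZMod p) = p := ZMod.card p
  have hfr : finrank (ZMod p) (Fin n → ZMod p) = n := by
    rw [Module.finrank_fintype_fun_eq_card, Fintype.card_fin]
  haveI : Finite (Submodule (ZMod p) (Fin n → ZMod p)) :=
    Finite.of_injective (fun W => (W : Set (Fin n → ZMod p))) SetLike.coe_injective
  -- basic cardinalities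
  have hcardM : Nat.card (Fin n → ZMod p) = p ^ n := by
    rw [Nat.card_eq_fintype_card, card_eq_pow_finrank (K := ZMod p), hcardK, hfr]
  have hcardV : Nat.card ↥V = p ^ m' := by
    rw [Nat.card_eq_fintype_card, card_eq_pow_finrank (K := ZMod p), hcardK, hV]
  -- a nonzero vector of V
  have hVne : V ≠ ⊥ := by
    intro h
    rw [h, finrank_bot] at hV
    omega
  obtain ⟨v₀, hv₀V, hv₀⟩ := Submodule.exists_mem_ne_zero_of_ne_bot hVne
  -- notation
  set S : Set (Submodule (ZMod p) (Fin n → ZMod p)) :=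
    {W | finrank (ZMod p) ↥W = k + 1 ∧ W ⊓ V ≠ ⊥} with hS
  set An := ∏ i : Fin (k+1), (p ^ n - p ^ (i : ℕ)) with hAn
  set Bm := ∏ i : Fin (k+1), (p ^ (k+1) - p ^ (i : ℕ)) with hBm
  clear_value S An Bm
  have hBmpos : 0 < Bm := by
    rw [hBm]
    refine Finset.prod_pos ?_
    intro i _
    have : p ^ (i : ℕ) < p ^ (k+1) := Nat.pow_lt_pow_right (by omega) i.2
    omega
  -- count of all linearly independent tuples
  have hfullLI : Nat.card {s : Fin (k+1) → (Fin n → ZMod p) //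
      LinearIndependent (ZMod p) s} = An := by
    rw [hAn, card_linearIndependent (by rw [hfr]; omega)]
    simp [hcardK, hfr]
  -- comparison of An and Bm
  have hAnBm : An ≤ 2 ^ (k+1) * p ^ ((k+1) * (n - (k+1))) * Bm := by
    rw [hAn, hBm]
    have hkey : ∀ i : Fin (k+1),
        p ^ n - p ^ (i : ℕ) ≤ 2 * p ^ (n - (k+1)) * (p ^ (k+1) - p ^ (i : ℕ)) := by
      intro i
      have hi : (i : ℕ) ≤ k := Nat.lt_succ_iff.1 i.2
      have h1 : p ^ (n - (k+1)) * p ^ (k+1) = p ^ n := by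
        rw [← pow_add]
        congr 1
        omega
      have h2 : p ^ (n - (k+1)) * p ^ (i : ℕ) = p ^ (n - (k+1) + i) := (pow_add p _ _).symm
      have h4 : 2 * p ^ (n - (k+1) + i) ≤ p ^ n := by
        calc 2 * p ^ (n - (k+1) + i) ≤ p * p ^ (n - (k+1) + i) :=
            Nat.mul_le_mul_right _ hp2
          _ = p ^ (n - (k+1) + i + 1) := by rw [pow_succ]; ring
          _ ≤ p ^ n := Nat.pow_le_pow_right (by omega) (by omega)
      have h5 : 2 * p ^ (n - (k+1)) * (p ^ (k+1) - p ^ (i : ℕ)) =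
          2 * (p ^ n) - 2 * p ^ (n - (k+1) + i) := by
        rw [mul_assoc, Nat.mul_sub, h1, h2, Nat.mul_sub]
      rw [h5]
      have h6 : 1 ≤ p ^ (i : ℕ) := Nat.one_le_pow _ _ (by omega)
      omega
    calc (∏ i : Fin (k+1), (p ^ n - p ^ (i : ℕ)))
        ≤ ∏ i : Fin (k+1), (2 * p ^ (n - (k+1)) * (p ^ (k+1) - p ^ (i : ℕ))) :=
        Finset.prod_le_prod' (fun i _ => hkey i)
      _ = (2 * p ^ (n - (k+1))) ^ (k+1) * ∏ i : Fin (k+1), (p ^ (k+1) - p ^ (i : ℕ)) := by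
          rw [Finset.prod_mul_distrib]
          congr 1
          rw [Finset.prod_const, Finset.card_univ, Fintype.card_fin]
      _ = 2 ^ (k+1) * p ^ ((k+1) * (n - (k+1))) * ∏ i : Fin (k+1), (p ^ (k+1) - p ^ (i : ℕ)) := by
          rw [mul_pow, ← pow_mul, mul_comm (n - (k+1))]
  have hpos : 0 < (p - 1) * ((p ^ n - 1) * Bm) := by
    have h1 : 0 < p - 1 := by omega
    have h2 : 0 < p ^ n - 1 := by
      have : 2 ≤ p ^ n := by
        calc 2 ≤ p := hp2
        _ = p ^ 1 := (pow_one p).symm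
        _ ≤ p ^ n := Nat.pow_le_pow_right (by omega) (by omega)
      omega
    exact Nat.mul_pos h1 (Nat.mul_pos h2 hBmpos)
  set E := Nat.card {s : Fin (k+1) → (Fin n → ZMod p) //
    LinearIndependent (ZMod p) s ∧ s 0 = v₀} with hE
  clear_value E
  -- full count decomposition
  have hfull : (p ^ n - 1) * E = An := by
    have h := aux_card_eq (K := ZMod p) (M := Fin n → ZMod p) (fun _ => True) k hv₀
    have e1 : {s : Fin (k+1) → (Fin n → ZMod p) // LinearIndependent (ZMod p) s ∧ True} ≃
        {s : Fin (k+1) → (Fin n → ZMod p) // LinearIndependent (ZMod p) s} :=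
      Equiv.subtypeEquivRight (fun _ => by simp)
    have e2 : {v : Fin n → ZMod p // True ∧ v ≠ 0} ≃ {v : Fin n → ZMod p // v ≠ 0} :=
      Equiv.subtypeEquivRight (fun _ => by simp)
    rw [Nat.card_congr e1, hfullLI, Nat.card_congr e2, aux_card_ne_zero, hcardM] at h
    rw [hE]
    exact h.symm
  -- count of T
  have hTcard : Nat.card {b : Fin (k+1) → (Fin n → ZMod p) //
      LinearIndependent (ZMod p) b ∧ b 0 ∈ V} = (p ^ m' - 1) * E := by
    rw [aux_card_eq (K := ZMod p) (M := Fin n → ZMod p) (fun v => v ∈ V) k hv₀,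
      aux_card_mem_ne_zero, hcardV, hE]
  clear hE
  -- the map from tuples to subspaces
  have hfmem : ∀ b : {b : Fin (k+1) → (Fin n → ZMod p) //
      LinearIndependent (ZMod p) b ∧ b 0 ∈ V},
      Submodule.span (ZMod p) (Set.range b.1) ∈ S := by
    rintro ⟨b, hbLI, hb0⟩
    rw [hS]
    constructor
    · rw [finrank_span_eq_card hbLI, Fintype.card_fin]
    · intro h
      have hb0mem : b 0 ∈ Submodule.span (ZMod p) (Set.range b) ⊓ V :=
        ⟨Submodule.subset_span (Set.mem_range_self 0), hb0⟩
      rw [h, Submodule.mem_bot] at hb0mem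
      exact hbLI.ne_zero 0 hb0mem
  let f : {b : Fin (k+1) → (Fin n → ZMod p) // LinearIndependent (ZMod p) b ∧ b 0 ∈ V} → ↥S :=
    fun b => ⟨Submodule.span (ZMod p) (Set.range b.1), hfmem b⟩
  -- fiber bound
  have hfiber : ∀ W : ↥S, (p - 1) * Bm ≤ (p ^ (k+1) - 1) * Nat.card {b // f b = W} := by
    rintro ⟨W, hW⟩
    have hW2 : finrank (ZMod p) ↥W = k + 1 ∧ W ⊓ V ≠ ⊥ := by rw [hS] at hW; exact hW
    obtain ⟨hWr, hWV⟩ := hW2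
    have e1 : {b // f b = (⟨W, hW⟩ : ↥S)} ≃
        {b : Fin (k+1) → (Fin n → ZMod p) //
          (LinearIndependent (ZMod p) b ∧ b 0 ∈ V) ∧
          Submodule.span (ZMod p) (Set.range b) = W} :=
      { toFun := fun b => ⟨b.1.1, b.1.2, congrArg Subtype.val b.2⟩
        invFun := fun b => ⟨⟨b.1, b.2.1⟩, Subtype.ext b.2.2⟩
        left_inv := fun _ => rfl
        right_inv := fun _ => rfl }
    obtain ⟨e2⟩ := aux_fiber_equiv (K := ZMod p) (M := Fin n → ZMod p)
      (fun v => v ∈ V) k W hWr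
    have hcongr := Nat.card_congr (e1.trans e2)
    rw [hcongr]
    -- now count in W
    obtain ⟨w₀, hw₀W, hw₀⟩ := Submodule.exists_mem_ne_zero_of_ne_bot hWV
    have hw₀W' : w₀ ∈ W := (Submodule.mem_inf.1 hw₀W).1
    have hw₀V : w₀ ∈ V := (Submodule.mem_inf.1 hw₀W).2
    have hu0 : (⟨w₀, hw₀W'⟩ : ↥W) ≠ 0 := fun h => hw₀ (congrArg Subtype.val h)
    have hdec := aux_card_eq (K := ZMod p) (M := ↥W) (fun w => (w : Fin n → ZMod p) ∈ V) k hu0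
    rw [hdec]
    -- N satisfies (p^(k+1) - 1) * N = Bm
    have hBmW : (p ^ (k+1) - 1) *
        Nat.card {s : Fin (k+1) → ↥W // LinearIndependent (ZMod p) s ∧
          s 0 = ⟨w₀, hw₀W'⟩} = Bm := by
      have h := aux_card_eq (K := ZMod p) (M := ↥W) (fun _ => True) k hu0
      have e3 : {s : Fin (k+1) → ↥W // LinearIndependent (ZMod p) s ∧ True} ≃
          {s : Fin (k+1) → ↥W // LinearIndependent (ZMod p) s} :=
        Equiv.subtypeEquivRight (fun _ => by simp)
      have e4 : {v : ↥W // True ∧ v ≠ 0} ≃ {v : ↥W // v ≠ 0} :=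
        Equiv.subtypeEquivRight (fun _ => by simp)
      have hcW : Nat.card ↥W = p ^ (k+1) := by
        rw [Nat.card_eq_fintype_card, card_eq_pow_finrank (K := ZMod p), hcardK, hWr]
      have hWLI : Nat.card {s : Fin (k+1) → ↥W // LinearIndependent (ZMod p) s} = Bm := by
        rw [hBm, card_linearIndependent (by rw [hWr])]
        simp [hcardK, hWr]
      rw [Nat.card_congr e3, hWLI, Nat.card_congr e4, aux_card_ne_zero, hcW] at h
      exact h.symm
    -- the number of admissible first vectors is at least p - 1
    have hfirst : p - 1 ≤ Nat.card {w : ↥W // (w : Fin n → ZMod p) ∈ V ∧ w ≠ 0} := by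
      have hinj : Function.Injective (fun c : {c : ZMod p // c ≠ 0} =>
          (⟨c.1 • (⟨w₀, hw₀W'⟩ : ↥W), ⟨V.smul_mem _ hw₀V, smul_ne_zero c.2 hu0⟩⟩ :
            {w : ↥W // (w : Fin n → ZMod p) ∈ V ∧ w ≠ 0})) := by
        intro c c' h
        have h2 : c.1 • (⟨w₀, hw₀W'⟩ : ↥W) = c'.1 • (⟨w₀, hw₀W'⟩ : ↥W) :=
          congrArg Subtype.val h
        exact Subtype.ext (smul_left_injective (ZMod p) hu0 h2)
      have hc : Nat.card {c : ZMod p // c ≠ 0} = p - 1 := by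
        rw [aux_card_ne_zero (M := ZMod p), Nat.card_eq_fintype_card, hcardK]
      calc p - 1 = Nat.card {c : ZMod p // c ≠ 0} := hc.symm
        _ ≤ Nat.card {w : ↥W // (w : Fin n → ZMod p) ∈ V ∧ w ≠ 0} :=
            Nat.card_le_card_of_injective _ hinj
    calc (p - 1) * Bm
        = (p - 1) * ((p ^ (k+1) - 1) *
            Nat.card {s : Fin (k+1) → ↥W // LinearIndependent (ZMod p) s ∧
              s 0 = ⟨w₀, hw₀W'⟩}) := by rw [hBmW]
      _ ≤ Nat.card {w : ↥W // (w : Fin n → ZMod p) ∈ V ∧ w ≠ 0} * ((p ^ (k+1) - 1) *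
            Nat.card {s : Fin (k+1) → ↥W // LinearIndependent (ZMod p) s ∧
              s 0 = ⟨w₀, hw₀W'⟩}) := Nat.mul_le_mul_right _ hfirst
      _ = (p ^ (k+1) - 1) * (Nat.card {w : ↥W // (w : Fin n → ZMod p) ∈ V ∧ w ≠ 0} *
            Nat.card {s : Fin (k+1) → ↥W // LinearIndependent (ZMod p) s ∧
              s 0 = ⟨w₀, hw₀W'⟩}) := by ring
  -- partition T over S
  have hsum : Nat.card ↥S * ((p - 1) * Bm) ≤
      (p ^ (k+1) - 1) * Nat.card {b : Fin (k+1) → (Fin n → ZMod p) //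
        LinearIndependent (ZMod p) b ∧ b 0 ∈ V} := by
    letI : Fintype ↥S := Fintype.ofFinite _
    have hpart : Nat.card {b : Fin (k+1) → (Fin n → ZMod p) //
        LinearIndependent (ZMod p) b ∧ b 0 ∈ V} =
        ∑ W : ↥S, Nat.card {b // f b = W} := by
      rw [Nat.card_eq_fintype_card,
        Fintype.card_congr (Equiv.sigmaFiberEquiv f).symm, Fintype.card_sigma]
      refine Finset.sum_congr rfl ?_
      intro W _
      exact (Nat.card_eq_fintype_card).symm
    rw [hpart, Finset.mul_sum]
    calc Nat.card ↥S * ((p - 1) * Bm)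
        = (Finset.univ (α := ↥S)).card • ((p - 1) * Bm) := by
          rw [Nat.card_eq_fintype_card, Finset.card_univ, smul_eq_mul]
      _ ≤ ∑ W : ↥S, (p ^ (k+1) - 1) * Nat.card {b // f b = W} :=
          Finset.card_nsmul_le_sum _ _ _ (fun W _ => hfiber W)
  -- put everything together
  rw [← Nat.card_coe_set_eq]
  have hchain : Nat.card ↥S * ((p - 1) * Bm) * (p ^ n - 1) ≤
      (p ^ (k+1) - 1) * ((p ^ m' - 1) * (2 ^ (k+1) * p ^ ((k+1) * (n - (k+1))) * Bm)) := by
    calc Nat.card ↥S * ((p - 1) * Bm) * (p ^ n - 1)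
        ≤ (p ^ (k+1) - 1) * Nat.card {b : Fin (k+1) → (Fin n → ZMod p) //
            LinearIndependent (ZMod p) b ∧ b 0 ∈ V} * (p ^ n - 1) :=
          Nat.mul_le_mul_right _ hsum
      _ = (p ^ (k+1) - 1) * ((p ^ m' - 1) * ((p ^ n - 1) * E)) := by rw [hTcard]; ring
      _ = (p ^ (k+1) - 1) * ((p ^ m' - 1) * An) := by rw [hfull]
      _ ≤ (p ^ (k+1) - 1) * ((p ^ m' - 1) * (2 ^ (k+1) * p ^ ((k+1) * (n - (k+1))) * Bm)) :=
          Nat.mul_le_mul_left _ (Nat.mul_le_mul_left _ hAnBm)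
  have harith := aux_arith (p := p) (n := n) (m' := m') (k := k) hp2 hm' hmn
  have hfinal : Nat.card ↥S * ((p - 1) * ((p ^ n - 1) * Bm)) ≤
      (2 ^ n * p ^ (m' - 1 + k * (n - (k+1)))) * ((p - 1) * ((p ^ n - 1) * Bm)) := by
    calc Nat.card ↥S * ((p - 1) * ((p ^ n - 1) * Bm))
        = Nat.card ↥S * ((p - 1) * Bm) * (p ^ n - 1) := by ring
      _ ≤ (p ^ (k+1) - 1) * ((p ^ m' - 1) * (2 ^ (k+1) * p ^ ((k+1) * (n - (k+1))) * Bm)) :=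
          hchain
      _ = (p ^ (k+1) - 1) * ((p ^ m' - 1) * (2 ^ (k+1) * p ^ ((k+1) * (n - (k+1))))) * Bm := by
          ring
      _ ≤ 2 ^ n * p ^ (m' - 1 + k * (n - (k+1))) * ((p - 1) * (p ^ n - 1)) * Bm :=
          Nat.mul_le_mul_right _ harith
      _ = (2 ^ n * p ^ (m' - 1 + k * (n - (k+1)))) * ((p - 1) * ((p ^ n - 1) * Bm)) := by ring
  have hle := Nat.le_of_mul_le_mul_right hfinal hpos
  exact hle
end

section
/- Let $S \subseteq \{1, \ldots, n-1\}$ be nonempty and suppose $S$ is not contained in $d\mathbb{Z}$ for any divisor $d > 1$ of $n$. Let $S'$ be the smallest subset of $\{1, \ldots, n-1\}$ containing $S$ and closed under the operations $(m_1, m_2) \mapsto m_1 + m_2$ whenever $m_1 + m_2 \leq n - 1$ and $(m_1, m_2) \mapsto m_1 + m_2 - n$ whenever $m_1 + m_2 - n \geq 1$. Then $1 \in S'$. -/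
theorem stmt10 (n : ℕ) (hn : 2 ≤ n) (S : Set ℕ) (hS : S.Nonempty)
    (hSsub : S ⊆ Set.Icc 1 (n - 1))
    (hdiv : ¬ ∃ d, d ∣ n ∧ 1 < d ∧ ∀ s ∈ S, d ∣ s)
    (S' : Set ℕ) (hSS' : S ⊆ S')
    (hadd : ∀ a ∈ S', ∀ b ∈ S', a + b ≤ n - 1 → a + b ∈ S')
    (hsub : ∀ a ∈ S', ∀ b ∈ S', n + 1 ≤ a + b → a + b - n ∈ S') :
    1 ∈ S' := by
  classical
  obtain ⟨s0, hs0⟩ := hS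
  have hn0 : 0 < n := by omega
  -- A : set of achievable residues
  set A : Set ℕ := {m | ∃ l : List ℕ, (∀ x ∈ l, x ∈ S) ∧ l.sum % n = m} with hAdef
  have hSA : ∀ s ∈ S, s ∈ A := by
    intro s hs
    have hb := hSsub hs
    rw [Set.mem_Icc] at hb
    exact ⟨[s], by simpa using hs, by simp [Nat.mod_eq_of_lt (by omega : s < n)]⟩
  have h0A : (0 : ℕ) ∈ A := ⟨[], by simp, by simp⟩
  have hAlt : ∀ a ∈ A, a < n := by
    rintro a ⟨l, -, rfl⟩
    exact Nat.mod_lt _ hn0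
  have hAclosed : ∀ a ∈ A, ∀ b ∈ A, (a + b) % n ∈ A := by
    rintro a ⟨l1, hl1, rfl⟩ b ⟨l2, hl2, rfl⟩
    refine ⟨l1 ++ l2, ?_, ?_⟩
    · intro x hx
      rcases List.mem_append.mp hx with h | h
      · exact hl1 x h
      · exact hl2 x h
    · rw [List.sum_append, Nat.add_mod]
  have hiter : ∀ k : ℕ, ∀ a ∈ A, ∀ e ∈ A, (a + k * e) % n ∈ A := by
    intro k
    induction k with
    | zero =>
      intro a ha e he
      simpa [Nat.mod_eq_of_lt (hAlt a ha)] using ha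
    | succ k ih =>
      intro a ha e he
      have h1 := hAclosed _ (ih a ha e he) e he
      have he' : e % n = e := Nat.mod_eq_of_lt (hAlt e he)
      have heq : (a + (k + 1) * e) % n = ((a + k * e) % n + e) % n := by
        rw [Nat.succ_mul, ← Nat.add_assoc, Nat.add_mod, he']
      rw [heq]
      exact h1
  -- subtraction within A
  have hsubA : ∀ a ∈ A, ∀ e ∈ A, e ≤ a → a - e ∈ A := by
    intro a ha e he hle
    have hkey := hiter (n - 1) a ha e he
    have hle' : e ≤ n * e := Nat.le_mul_of_pos_left e hn0
    have heq : a + (n - 1) * e = (a - e) + e * n := by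
      rw [Nat.sub_one_mul, mul_comm e n]
      omega
    rw [heq, Nat.add_mul_mod_self_right] at hkey
    have hlt : a - e < n := by have := hAlt a ha; omega
    rwa [Nat.mod_eq_of_lt hlt] at hkey
  -- least positive element of A
  have hs0b := hSsub hs0
  rw [Set.mem_Icc] at hs0b
  have hPex : ∃ k : ℕ, 0 < k ∧ k ∈ A := ⟨s0, by omega, hSA s0 hs0⟩
  obtain ⟨d, ⟨hd0, hdA⟩, hmin⟩ : ∃ d, (0 < d ∧ d ∈ A) ∧ ∀ m < d, ¬(0 < m ∧ m ∈ A) :=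
    ⟨Nat.find hPex, Nat.find_spec hPex, fun m hm => Nat.find_min hPex hm⟩
  have hdlt : d < n := hAlt d hdA
  -- every element of A is a multiple of d
  have hmult : ∀ a, a ∈ A → d ∣ a := by
    intro a
    induction a using Nat.strong_induction_on with
    | _ a ih =>
      intro ha
      rcases Nat.eq_zero_or_pos a with h0 | hpos
      · simp [h0]
      · have hda : d ≤ a := by
          by_contra h
          exact hmin a (by omega) ⟨hpos, ha⟩
        have hmem : a - d ∈ A := hsubA a ha d hdA hda
        have hdvd := ih (a - d) (by omega) hmem
        have heq : a = (a - d) + d := by omega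
        rw [heq]
        exact Nat.dvd_add hdvd dvd_rfl
  -- d divides n
  have hdn : d ∣ n := by
    by_contra hnd
    have hr : 0 < n % d := Nat.pos_of_ne_zero fun h => hnd (Nat.dvd_of_mod_eq_zero h)
    have hrd : n % d < d := Nat.mod_lt _ hd0
    have hq : n / d * d = n - n % d := by
      have h := Nat.mod_add_div n d
      rw [mul_comm] at h
      omega
    have h1 : (0 + n / d * d) % n ∈ A := hiter (n / d) 0 h0A d hdA
    have hlt1 : n - n % d < n := by omega
    rw [Nat.zero_add, hq, Nat.mod_eq_of_lt hlt1] at h1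
    have h2 : (n - n % d + d) % n ∈ A := hAclosed _ h1 d hdA
    have hge : n ≤ n - n % d + d := by omega
    have hlt2 : n - n % d + d - n < n := by omega
    have h3 : (n - n % d + d) % n = d - n % d := by
      rw [Nat.mod_eq_sub_mod hge, Nat.mod_eq_of_lt hlt2]
      omega
    rw [h3] at h2
    exact hmin (d - n % d) (by omega) ⟨by omega, h2⟩
  -- d = 1
  have hd1 : d = 1 := by
    by_contra h
    exact hdiv ⟨d, hdn, by omega, fun s hs => hmult s (hSA s hs)⟩
  rw [hd1] at hdA
  obtain ⟨l, hl, hlsum⟩ := hdA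
  -- key induction: achievable residues are 0 or in S'
  have hB : ∀ l : List ℕ, (∀ x ∈ l, x ∈ S) →
      l.sum % n = 0 ∨ (l.sum % n ∈ S' ∧ 1 ≤ l.sum % n ∧ l.sum % n ≤ n - 1) := by
    intro l
    induction l with
    | nil => intro _; left; simp
    | cons a t ih =>
      intro hmem
      have haS : a ∈ S := hmem a List.mem_cons_self
      have haS' : a ∈ S' := hSS' haS
      have hab := hSsub haS
      rw [Set.mem_Icc] at hab
      have ha' : a % n = a := Nat.mod_eq_of_lt (by omega)
      have hkey : (a :: t).sum % n = (a + t.sum % n) % n := by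
        rw [List.sum_cons]
        conv_lhs => rw [Nat.add_mod]
        rw [ha']
      have hmlt : t.sum % n < n := Nat.mod_lt _ hn0
      rcases ih (fun x hx => hmem x (List.mem_cons_of_mem a hx)) with h0 | ⟨hmS', hm1, hm2⟩
      · right
        rw [hkey, h0, Nat.add_zero, ha']
        exact ⟨haS', by omega⟩
      · rcases Nat.lt_trichotomy (a + t.sum % n) n with hlt | heq | hgt
        · right
          rw [hkey, Nat.mod_eq_of_lt hlt]
          exact ⟨hadd a haS' _ hmS' (by omega), by omega, by omega⟩
        · left
          rw [hkey, heq, Nat.mod_self]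
        · right
          have hv : (a + t.sum % n) % n = a + t.sum % n - n := by
            rw [Nat.mod_eq_sub_mod (by omega)]
            exact Nat.mod_eq_of_lt (by omega)
          rw [hkey, hv]
          exact ⟨hsub a haS' _ hmS' (by omega), by omega, by omega⟩
  rcases hB l hl with h0 | ⟨h1, -, -⟩
  · omega
  · rwa [hlsum] at h1
end

section
/- Let $W_1, W_2$ be subspaces of $\mathbb{F}_p^n$ with $W_1 \cap W_2 = 0$, and $K \subseteq \mathbb{F}_p^n$ a finite nonempty set. Then $|K|^3 \leq |\pi^{W_1}(K)| \cdot |\pi^{W_2}(K)| \cdot \sum_{c \in \mathbb{F}_p^n/(W_1+W_2)} |K \cap \pi_{W_1+W_2}^{-1}(c)|^2$, i.e. the cube of $|K|$ is bounded by the product of the sizes of the two projections times the sum of squared fiber sizes of the projection mod $W_1 + W_2$. -/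
lemma amgm3poly {x y z : ℝ} (hx : 0 ≤ x) (hy : 0 ≤ y) (hz : 0 ≤ z) :
    27 * (x * y * z) ≤ (x + y + z) ^ 3 := by
  nlinarith [mul_nonneg hx (sq_nonneg (y - z)), mul_nonneg hy (sq_nonneg (x - z)),
    mul_nonneg hz (sq_nonneg (x - y)), mul_nonneg hx (sq_nonneg (x - y)),
    mul_nonneg hy (sq_nonneg (y - z)), mul_nonneg hz (sq_nonneg (x - z)),
    mul_nonneg (add_nonneg (add_nonneg hx hy) hz) (sq_nonneg (x - y)),
    mul_nonneg (add_nonneg (add_nonneg hx hy) hz) (sq_nonneg (y - z)),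
    mul_nonneg (add_nonneg (add_nonneg hx hy) hz) (sq_nonneg (x - z))]

lemma amgm3 {w x y z : ℝ} (hx : 0 ≤ x) (hy : 0 ≤ y) (hz : 0 ≤ z) (hw : 0 ≤ w)
    (h : w ^ 3 ≤ x * y * z) : 3 * w ≤ x + y + z := by
  by_contra hc
  push_neg at hc
  have h1 : (x + y + z) ^ 3 < (3 * w) ^ 3 :=
    pow_lt_pow_left₀ hc (by linarith) (by norm_num)
  have h2 := amgm3poly hx hy hz
  nlinarith

lemma triple_factor {ι : Type*} (s : Finset ι) (f g h : ι → ℝ) :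
    ∑ i ∈ s, ∑ j ∈ s, ∑ k ∈ s, f i * g j * h k
      = (∑ i ∈ s, f i) * (∑ i ∈ s, g i) * (∑ i ∈ s, h i) := by
  rw [Finset.sum_mul_sum, Finset.sum_mul]
  refine Finset.sum_congr rfl fun i _ => ?_
  rw [Finset.sum_mul]
  refine Finset.sum_congr rfl fun j _ => ?_
  rw [Finset.mul_sum]

lemma holder3 {ι : Type*} (s : Finset ι) (a b u : ι → ℝ)
    (ha : ∀ i ∈ s, 0 ≤ a i) (hb : ∀ i ∈ s, 0 ≤ b i) (hu : ∀ i ∈ s, 0 ≤ u i)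
    (hab : ∀ i ∈ s, u i ≤ a i * b i) :
    (∑ i ∈ s, u i) ^ 3 ≤ (∑ i ∈ s, a i) * (∑ i ∈ s, b i) * (∑ i ∈ s, (u i) ^ 2) := by
  have key : ∑ i ∈ s, ∑ j ∈ s, ∑ k ∈ s, (3 : ℝ) * (u i * u j * u k)
      ≤ ∑ i ∈ s, ∑ j ∈ s, ∑ k ∈ s,
        (a i * b j * (u k) ^ 2 + a j * b k * (u i) ^ 2 + a k * b i * (u j) ^ 2) := by
    refine Finset.sum_le_sum fun i hi => Finset.sum_le_sum fun j hj =>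
      Finset.sum_le_sum fun k hk => ?_
    have hx : (0:ℝ) ≤ a i * b j * (u k) ^ 2 :=
      mul_nonneg (mul_nonneg (ha i hi) (hb j hj)) (sq_nonneg _)
    have hy : (0:ℝ) ≤ a j * b k * (u i) ^ 2 :=
      mul_nonneg (mul_nonneg (ha j hj) (hb k hk)) (sq_nonneg _)
    have hz : (0:ℝ) ≤ a k * b i * (u j) ^ 2 :=
      mul_nonneg (mul_nonneg (ha k hk) (hb i hi)) (sq_nonneg _)
    have hw : (0:ℝ) ≤ u i * u j * u k :=
      mul_nonneg (mul_nonneg (hu i hi) (hu j hj)) (hu k hk)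
    refine amgm3 hx hy hz hw ?_
    have h1 : u i * u j * u k ≤ (a i * b i) * ((a j * b j) * (a k * b k)) := by
      have := mul_le_mul (hab j hj) (hab k hk) (hu k hk)
        (mul_nonneg (ha j hj) (hb j hj))
      have := mul_le_mul (hab i hi) this (mul_nonneg (hu j hj) (hu k hk))
        (mul_nonneg (ha i hi) (hb i hi))
      calc u i * u j * u k = u i * (u j * u k) := by ring
        _ ≤ a i * b i * (a j * b j * (a k * b k)) := this
    calc (u i * u j * u k) ^ 3
        = (u i * u j * u k) * (u i * u j * u k) ^ 2 := by ring
      _ ≤ ((a i * b i) * ((a j * b j) * (a k * b k))) * (u i * u j * u k) ^ 2 :=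
          mul_le_mul_of_nonneg_right h1 (sq_nonneg _)
      _ = (a i * b j * (u k) ^ 2) * (a j * b k * (u i) ^ 2) * (a k * b i * (u j) ^ 2) := by
          ring
  have e1 : ∑ i ∈ s, ∑ j ∈ s, ∑ k ∈ s, (3 : ℝ) * (u i * u j * u k)
      = 3 * ((∑ i ∈ s, u i) * (∑ i ∈ s, u i) * (∑ i ∈ s, u i)) := by
    rw [← triple_factor s u u u]
    simp_rw [Finset.mul_sum]
  have e2 : ∑ i ∈ s, ∑ j ∈ s, ∑ k ∈ s,
      (a i * b j * (u k) ^ 2 + a j * b k * (u i) ^ 2 + a k * b i * (u j) ^ 2)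
      = 3 * ((∑ i ∈ s, a i) * (∑ i ∈ s, b i) * (∑ i ∈ s, (u i) ^ 2)) := by
    have f1 := triple_factor s a b (fun i => (u i) ^ 2)
    have f2 := triple_factor s (fun i => (u i) ^ 2) a b
    have f3 := triple_factor s b (fun i => (u i) ^ 2) a
    have g2 : ∑ i ∈ s, ∑ j ∈ s, ∑ k ∈ s, a j * b k * (u i) ^ 2
        = ∑ i ∈ s, ∑ j ∈ s, ∑ k ∈ s, (u i) ^ 2 * a j * b k :=
      Finset.sum_congr rfl fun i _ => Finset.sum_congr rfl fun j _ =>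
        Finset.sum_congr rfl fun k _ => by ring
    have g3 : ∑ i ∈ s, ∑ j ∈ s, ∑ k ∈ s, a k * b i * (u j) ^ 2
        = ∑ i ∈ s, ∑ j ∈ s, ∑ k ∈ s, b i * (u j) ^ 2 * a k :=
      Finset.sum_congr rfl fun i _ => Finset.sum_congr rfl fun j _ =>
        Finset.sum_congr rfl fun k _ => by ring
    simp only [Finset.sum_add_distrib]
    rw [g2, g3, f1, f2, f3]
    ring
  rw [e1] at key
  rw [e2] at key
  nlinarith [key]
theorem stmt12 (p n : ℕ) (hp : p.Prime)
    (W₁ W₂ : Submodule (ZMod p) (Fin n → ZMod p)) (h : W₁ ⊓ W₂ = ⊥)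
    (K : Set (Fin n → ZMod p)) (hK : K.Finite) (hne : K.Nonempty) :
    K.ncard ^ 3 ≤ (W₁.mkQ '' K).ncard * (W₂.mkQ '' K).ncard *
      ∑ᶠ c : (Fin n → ZMod p) ⧸ (W₁ ⊔ W₂),
        (K ∩ (W₁ ⊔ W₂).mkQ ⁻¹' {c}).ncard ^ 2 := by
  classical
  set Q : Submodule (ZMod p) (Fin n → ZMod p) := W₁ ⊔ W₂ with hQdef
  set T : Finset (Fin n → ZMod p) := hK.toFinset with hTdef
  have hKT : (↑T : Set (Fin n → ZMod p)) = K := hK.coe_toFinset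
  set q := Q.mkQ with hqdef
  set s : Finset ((Fin n → ZMod p) ⧸ Q) := T.image q with hsdef
  set F : ((Fin n → ZMod p) ⧸ Q) → Finset (Fin n → ZMod p) := fun c => T.filter (fun x => q x = c) with hFdef
  have hfib : ∀ c, K ∩ q ⁻¹' {c} = ↑(F c) := by
    intro c
    ext x
    simp only [hFdef, Finset.coe_filter, Set.mem_setOf_eq, Set.mem_inter_iff,
      Set.mem_preimage, Set.mem_singleton_iff, ← hKT, Finset.mem_coe]
  -- finsum to finite sum
  have hfin : ∑ᶠ c, (K ∩ q ⁻¹' {c}).ncard ^ 2 = ∑ c ∈ s, ((F c).card) ^ 2 := by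
    have hsupp : (Function.support fun c => (K ∩ q ⁻¹' {c}).ncard ^ 2) ⊆ ↑s := by
      intro c hc
      simp only [Function.mem_support] at hc
      by_contra hcs
      apply hc
      have : F c = ∅ := by
        rw [hFdef, Finset.filter_eq_empty_iff]
        intro x hx hqx
        exact hcs (by rw [hsdef]; exact hqx ▸ Finset.mem_image_of_mem q hx)
      rw [hfib c, this]
      simp
    rw [finsum_eq_finset_sum_of_support_subset _ hsupp]
    refine Finset.sum_congr rfl fun c _ => ?_
    rw [hfib c, Set.ncard_coe_finset]
  -- injectivity of the pairing
  have hinj : Function.Injective (fun x : (Fin n → ZMod p) => (W₁.mkQ x, W₂.mkQ x)) := by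
    intro x y hxy
    simp only [Prod.mk.injEq] at hxy
    have h1 : x - y ∈ W₁ := (Submodule.Quotient.eq W₁).mp (by simpa using hxy.1)
    have h2 : x - y ∈ W₂ := (Submodule.Quotient.eq W₂).mp (by simpa using hxy.2)
    have : x - y ∈ W₁ ⊓ W₂ := ⟨h1, h2⟩
    rw [h, Submodule.mem_bot, sub_eq_zero] at this
    exact this
  -- the per-fiber bound
  have hu_ab : ∀ t : Finset (Fin n → ZMod p), t.card ≤ (t.image W₁.mkQ).card * (t.image W₂.mkQ).card := by
    intro t
    calc t.card = (t.image (fun x => (W₁.mkQ x, W₂.mkQ x))).card :=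
          (Finset.card_image_of_injective t hinj).symm
      _ ≤ ((t.image W₁.mkQ) ×ˢ (t.image W₂.mkQ)).card := by
          apply Finset.card_le_card
          intro z hz
          simp only [Finset.mem_image] at hz
          obtain ⟨x, hx, rfl⟩ := hz
          exact Finset.mem_product.mpr ⟨Finset.mem_image_of_mem _ hx, Finset.mem_image_of_mem _ hx⟩
      _ = _ := Finset.card_product _ _
  -- disjointness of fiber images
  have hdisj : ∀ (W : Submodule (ZMod p) (Fin n → ZMod p)), W ≤ Q →
      ∑ c ∈ s, ((F c).image W.mkQ).card ≤ (T.image W.mkQ).card := by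
    intro W hWQ
    have hdis : ∀ c ∈ s, ∀ c' ∈ s, c ≠ c' →
        Disjoint ((F c).image W.mkQ) ((F c').image W.mkQ) := by
      intro c _ c' _ hcc'
      rw [Finset.disjoint_left]
      intro z hz hz'
      simp only [Finset.mem_image, hFdef, Finset.mem_filter] at hz hz'
      obtain ⟨x, ⟨hxT, hxc⟩, rfl⟩ := hz
      obtain ⟨y, ⟨hyT, hyc⟩, hxy⟩ := hz'
      have hW : x - y ∈ W := (Submodule.Quotient.eq W).mp (by simpa using hxy.symm)
      have hQ' : x - y ∈ Q := hWQ hW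
      have : q x = q y := (Submodule.Quotient.eq Q).mpr hQ'
      exact hcc' (hxc ▸ hyc ▸ this)
    rw [← Finset.card_biUnion hdis]
    apply Finset.card_le_card
    apply Finset.biUnion_subset.mpr
    intro c _
    exact Finset.image_subset_image (Finset.filter_subset _ _)
  -- partition of card
  have hpart : T.card = ∑ c ∈ s, (F c).card := Finset.card_eq_sum_card_image q T
  -- apply holder3
  have H := holder3 s (fun c => (((F c).image W₁.mkQ).card : ℝ))
      (fun c => (((F c).image W₂.mkQ).card : ℝ)) (fun c => ((F c).card : ℝ))
      (fun c _ => Nat.cast_nonneg _) (fun c _ => Nat.cast_nonneg _)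
      (fun c _ => Nat.cast_nonneg _)
      (fun c _ => by
        show ((F c).card : ℝ) ≤ (((F c).image W₁.mkQ).card : ℝ) * (((F c).image W₂.mkQ).card : ℝ)
        exact_mod_cast hu_ab (F c))
  -- rewrite goal
  have hgoal1 : K.ncard = T.card := by rw [← hKT, Set.ncard_coe_finset]
  have hgoal2 : (W₁.mkQ '' K).ncard = (T.image W₁.mkQ).card := by
    rw [← hKT, ← Finset.coe_image, Set.ncard_coe_finset]
  have hgoal3 : (W₂.mkQ '' K).ncard = (T.image W₂.mkQ).card := by
    rw [← hKT, ← Finset.coe_image, Set.ncard_coe_finset]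
  rw [hgoal1, hgoal2, hgoal3, hfin, hpart]
  have final : ((∑ c ∈ s, (F c).card : ℕ) : ℝ) ^ 3 ≤
      (((T.image W₁.mkQ).card : ℕ) : ℝ) * (((T.image W₂.mkQ).card : ℕ) : ℝ) *
        ((∑ c ∈ s, (F c).card ^ 2 : ℕ) : ℝ) := by
    push_cast
    calc (∑ c ∈ s, ((F c).card : ℝ)) ^ 3
        ≤ (∑ c ∈ s, (((F c).image W₁.mkQ).card : ℝ)) *
            (∑ c ∈ s, (((F c).image W₂.mkQ).card : ℝ)) *
            (∑ c ∈ s, ((F c).card : ℝ) ^ 2) := H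
      _ ≤ ((T.image W₁.mkQ).card : ℝ) * ((T.image W₂.mkQ).card : ℝ) *
            (∑ c ∈ s, ((F c).card : ℝ) ^ 2) := by
          apply mul_le_mul_of_nonneg_right
          · apply mul_le_mul
            · calc ∑ c ∈ s, (((F c).image W₁.mkQ).card : ℝ)
                  = ((∑ c ∈ s, ((F c).image W₁.mkQ).card : ℕ) : ℝ) := by
                    rw [Nat.cast_sum]
                _ ≤ _ := Nat.cast_le.mpr (hdisj W₁ le_sup_left)
            · calc ∑ c ∈ s, (((F c).image W₂.mkQ).card : ℝ)
                  = ((∑ c ∈ s, ((F c).image W₂.mkQ).card : ℕ) : ℝ) := by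
                    rw [Nat.cast_sum]
                _ ≤ _ := Nat.cast_le.mpr (hdisj W₂ le_sup_right)
            · exact Finset.sum_nonneg fun c _ => Nat.cast_nonneg _
            · exact Nat.cast_nonneg _
          · exact Finset.sum_nonneg fun c _ => sq_nonneg _
  refine (Nat.cast_le (α := ℝ)).mp ?_
  rw [Nat.cast_pow, Nat.cast_mul, Nat.cast_mul]
  exact final
end

section
/- Let $W_1 \in Gr(n, n-m_1)$, $W_2 \in Gr(n, n-m_2)$ be subspaces of $\mathbb{F}_p^n$ with $W_1 \cap W_2 = 0$, and suppose $|\pi^{W_1}(K)| \leq M_1$ and $|\pi^{W_2}(K)| \leq M_2$ for a finite set $K \subseteq \mathbb{F}_p^n$. Then there exists $K' \subseteq K$ with $|K'| \geq c|K|/\log p$ (for an absolute constant $c > 0$, assuming $p \geq 3$) such that $|\pi^{W_1+W_2}(K')| \leq C M_1 M_2 / |K'|$ for an absolute constant $C$. -/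
open Finset

set_option maxHeartbeats 2000000 in

lemma stmt13_core {α γ : Type*} {γ₁ γ₂ : Type u} [DecidableEq α] [DecidableEq γ] [DecidableEq γ₁]
    [DecidableEq γ₂] (A : Finset α) (π : α → γ) (π₁ : α → γ₁) (π₂ : α → γ₂)
    (hinj : ∀ x ∈ A, ∀ y ∈ A, π₁ x = π₁ y → π₂ x = π₂ y → x = y)
    (h₁ : ∀ x y : α, π₁ x = π₁ y → π x = π y)
    (h₂ : ∀ x y : α, π₂ x = π₂ y → π x = π y)
    (hA : A.Nonempty) :
    ∃ A' ⊆ A, (A.card : ℝ) ≤ 2 * A'.card ∧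
      ((A'.image π).card : ℝ) * A.card ≤ 2 * (A.image π₁).card * (A.image π₂).card := by
  classical
  set T := A.image π with hT
  set F : γ → Finset α := fun z => A.filter (fun x => π x = z) with hF
  set a : γ → ℕ := fun z => ((F z).image π₁).card with ha
  set b : γ → ℕ := fun z => ((F z).image π₂).card with hb
  set f : γ → ℕ := fun z => (F z).card with hf
  have hFsub : ∀ z, F z ⊆ A := fun z => filter_subset _ _
  -- fiber bound
  have hfab : ∀ z, f z ≤ a z * b z := by
    intro z
    have : (F z).card ≤ (((F z).image π₁) ×ˢ ((F z).image π₂)).card := by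
      apply Finset.card_le_card_of_injOn (fun x => (π₁ x, π₂ x))
      · intro x hx
        exact mem_product.mpr ⟨mem_image_of_mem _ hx, mem_image_of_mem _ hx⟩
      · intro x hx y hy hxy
        exact hinj x (hFsub z hx) y (hFsub z hy) (congrArg Prod.fst hxy) (congrArg Prod.snd hxy)
    simpa [Finset.card_product] using this
  -- disjointness of fiber images under π₁
  have hsum : ∀ (δ : Type _) [DecidableEq δ] (πi : α → δ),
      (∀ x y : α, πi x = πi y → π x = π y) →
      ∑ z ∈ T, ((F z).image πi).card ≤ (A.image πi).card := by
    intro δ _ πi hi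
    have hdisj : ∀ z ∈ T, ∀ z' ∈ T, z ≠ z' →
        Disjoint ((F z).image πi) ((F z').image πi) := by
      intro z _ z' _ hne
      rw [Finset.disjoint_left]
      rintro w hw hw'
      obtain ⟨x, hx, rfl⟩ := mem_image.mp hw
      obtain ⟨y, hy, hxy⟩ := mem_image.mp hw'
      have hz := (mem_filter.mp hx).2
      have hz' := (mem_filter.mp hy).2
      exact hne (by rw [← hz, ← hz', (hi y x hxy).symm])
    calc ∑ z ∈ T, ((F z).image πi).card
        = (T.biUnion (fun z => (F z).image πi)).card := (Finset.card_biUnion hdisj).symm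
      _ ≤ (A.image πi).card := by
          apply Finset.card_le_card
          intro w hw
          obtain ⟨z, _, hw⟩ := mem_biUnion.mp hw
          obtain ⟨x, hx, rfl⟩ := mem_image.mp hw
          exact mem_image_of_mem _ (hFsub z hx)
  have hsum₁ : ∑ z ∈ T, a z ≤ (A.image π₁).card := hsum γ₁ π₁ h₁
  have hsum₂ : ∑ z ∈ T, b z ≤ (A.image π₂).card := hsum γ₂ π₂ h₂
  set S₁ : ℕ := (A.image π₁).card
  set S₂ : ℕ := (A.image π₂).card
  set N : ℕ := A.card with hN
  have hN1 : 1 ≤ N := Finset.card_pos.mpr hA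
  have hS1 : 1 ≤ S₁ := Finset.card_pos.mpr (hA.image _)
  have hS2 : 1 ≤ S₂ := Finset.card_pos.mpr (hA.image _)
  set S : ℝ := Real.sqrt ((S₁ : ℝ) * S₂) with hS
  have hSpos : 0 < S := Real.sqrt_pos.mpr (by positivity)
  have hSsq : S ^ 2 = (S₁ : ℝ) * S₂ := Real.sq_sqrt (by positivity)
  -- Cauchy-Schwarz: sum of sqrt f ≤ S
  have hQ : ∑ z ∈ T, Real.sqrt (f z) ≤ S := by
    calc ∑ z ∈ T, Real.sqrt (f z)
        ≤ ∑ z ∈ T, Real.sqrt (a z) * Real.sqrt (b z) := by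
          apply Finset.sum_le_sum
          intro z _
          rw [← Real.sqrt_mul (by positivity)]
          exact Real.sqrt_le_sqrt (by exact_mod_cast hfab z)
      _ ≤ Real.sqrt (∑ z ∈ T, (a z : ℝ)) * Real.sqrt (∑ z ∈ T, (b z : ℝ)) :=
          Real.sum_sqrt_mul_sqrt_le _ (fun i => by positivity) (fun i => by positivity)
      _ ≤ S := by
          have h1 : Real.sqrt (∑ z ∈ T, (a z : ℝ)) ≤ Real.sqrt (S₁ : ℝ) :=
            Real.sqrt_le_sqrt (by exact_mod_cast hsum₁)
          have h2 : Real.sqrt (∑ z ∈ T, (b z : ℝ)) ≤ Real.sqrt (S₂ : ℝ) :=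
            Real.sqrt_le_sqrt (by exact_mod_cast hsum₂)
          have h3 : Real.sqrt (S₁:ℝ) * Real.sqrt (S₂:ℝ) = S := by
            rw [hS, Real.sqrt_mul (Nat.cast_nonneg S₁)]
          calc Real.sqrt (∑ z ∈ T, (a z : ℝ)) * Real.sqrt (∑ z ∈ T, (b z : ℝ))
              ≤ Real.sqrt (S₁:ℝ) * Real.sqrt (S₂:ℝ) :=
                mul_le_mul h1 h2 (Real.sqrt_nonneg _) (Real.sqrt_nonneg _)
            _ = S := h3
  -- threshold
  set θ : ℝ := ((N : ℝ) / (2 * S)) ^ 2 with hθ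
  have hNpos : (0:ℝ) < (N : ℝ) := by exact_mod_cast hN1
  have h2S : (0:ℝ) < 2 * S := by linarith
  have hθ0 : 0 < θ := hθ ▸ pow_pos (div_pos hNpos h2S) 2
  have hND : (0:ℝ) ≤ (N : ℝ) / (2 * S) := le_of_lt (div_pos hNpos h2S)
  have hsqθ : Real.sqrt θ = (N : ℝ) / (2 * S) := Real.sqrt_sq hND
  set A' : Finset α := A.filter (fun x => θ ≤ (f (π x) : ℝ)) with hA'
  refine ⟨A', filter_subset _ _, ?_, ?_⟩
  · -- size bound
    have hsplit : A.card = A'.card + (A.filter (fun x => ¬ θ ≤ (f (π x) : ℝ))).card := by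
      rw [hA', Finset.card_filter_add_card_filter_not]
    set B := A.filter (fun x => ¬ θ ≤ (f (π x) : ℝ)) with hB
    have hBcard : (B.card : ℝ) ≤ (N : ℝ) / 2 := by
      have hBfib : B.card = ∑ z ∈ T.filter (fun z => ¬ θ ≤ (f z : ℝ)),
          (B.filter (fun x => π x = z)).card := by
        apply Finset.card_eq_sum_card_fiberwise
        intro x hx
        obtain ⟨hxA, hxθ⟩ := mem_filter.mp hx
        exact mem_filter.mpr ⟨mem_image_of_mem _ hxA, hxθ⟩
      have hBle : ∀ z ∈ T.filter (fun z => ¬ θ ≤ (f z : ℝ)),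
          ((B.filter (fun x => π x = z)).card : ℝ) ≤ Real.sqrt θ * Real.sqrt (f z) := by
        intro z hz
        obtain ⟨hzT, hzθ⟩ := mem_filter.mp hz
        have hsub : B.filter (fun x => π x = z) ⊆ F z := by
          intro x hx
          obtain ⟨hxB, hxz⟩ := mem_filter.mp hx
          exact mem_filter.mpr ⟨(mem_filter.mp hxB).1, hxz⟩
        have h1 : ((B.filter (fun x => π x = z)).card : ℝ) ≤ (f z : ℝ) := by
          exact_mod_cast Finset.card_le_card hsub
        have h2 : (f z : ℝ) ≤ Real.sqrt θ * Real.sqrt (f z) := by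
          nth_rewrite 1 [← Real.sq_sqrt (Nat.cast_nonneg (f z) : (0:ℝ) ≤ (f z : ℝ))]
          rw [sq]
          apply mul_le_mul_of_nonneg_right _ (Real.sqrt_nonneg _)
          exact Real.sqrt_le_sqrt (le_of_not_ge hzθ)
        linarith
      have : (B.card : ℝ) ≤ Real.sqrt θ * ∑ z ∈ T, Real.sqrt (f z) := by
        rw [hBfib]
        push_cast
        calc ∑ z ∈ T.filter (fun z => ¬ θ ≤ (f z : ℝ)), ((B.filter (fun x => π x = z)).card : ℝ)
            ≤ ∑ z ∈ T.filter (fun z => ¬ θ ≤ (f z : ℝ)), Real.sqrt θ * Real.sqrt (f z) := by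
              apply Finset.sum_le_sum hBle
          _ ≤ ∑ z ∈ T, Real.sqrt θ * Real.sqrt (f z) := by
              apply Finset.sum_le_sum_of_subset_of_nonneg (filter_subset _ _)
              intro z _ _
              exact mul_nonneg (Real.sqrt_nonneg _) (Real.sqrt_nonneg _)
          _ = Real.sqrt θ * ∑ z ∈ T, Real.sqrt (f z) := by rw [Finset.mul_sum]
      calc (B.card : ℝ) ≤ Real.sqrt θ * ∑ z ∈ T, Real.sqrt (f z) := this
        _ ≤ Real.sqrt θ * S := by
            apply mul_le_mul_of_nonneg_left hQ (Real.sqrt_nonneg _)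
        _ = (N : ℝ) / 2 := by
            rw [hsqθ]; field_simp
    have : (A.card : ℝ) = (A'.card : ℝ) + (B.card : ℝ) := by exact_mod_cast hsplit
    rw [hN] at hBcard ⊢
    linarith
  · -- image bound
    have himg : A'.image π = T.filter (fun z => θ ≤ (f z : ℝ)) := by
      ext z
      constructor
      · intro hz
        obtain ⟨x, hx, rfl⟩ := mem_image.mp hz
        rw [hA'] at hx
        have hx' := mem_filter.mp hx
        exact mem_filter.mpr ⟨mem_image_of_mem _ hx'.1, hx'.2⟩
      · intro hz
        obtain ⟨hzT, hzθ⟩ := mem_filter.mp hz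
        obtain ⟨x, hxA, rfl⟩ := mem_image.mp hzT
        refine mem_image_of_mem _ ?_
        rw [hA']
        exact mem_filter.mpr ⟨hxA, hzθ⟩
    set T' := T.filter (fun z => θ ≤ (f z : ℝ)) with hT'
    have ht' : (T'.card : ℝ) * Real.sqrt θ ≤ S := by
      calc (T'.card : ℝ) * Real.sqrt θ = ∑ _z ∈ T', Real.sqrt θ := by
            rw [Finset.sum_const, nsmul_eq_mul]
        _ ≤ ∑ z ∈ T', Real.sqrt (f z) := by
            apply Finset.sum_le_sum
            intro z hz
            exact Real.sqrt_le_sqrt (mem_filter.mp hz).2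
        _ ≤ ∑ z ∈ T, Real.sqrt (f z) := by
            apply Finset.sum_le_sum_of_subset_of_nonneg (filter_subset _ _)
            intro z _ _
            exact Real.sqrt_nonneg _
        _ ≤ S := hQ
    rw [hsqθ] at ht'
    clear_value T F a b f S₁ S₂ N S θ A'
    have key : ∀ x s nn : ℝ, 0 < s → 0 < nn → x * (nn / (2 * s)) ≤ s → x * nn ≤ 2 * s ^ 2 := by
      intro x s nn hs hnn h
      have h2s : (0:ℝ) < 2 * s := by linarith
      have h1 := mul_le_mul_of_nonneg_right h (le_of_lt h2s)
      have heq : x * (nn / (2 * s)) * (2 * s) = x * nn := by field_simp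
      nlinarith
    have hfin : ((T'.card : ℕ) : ℝ) * (N : ℝ) ≤ 2 * S ^ 2 := key _ _ _ hSpos hNpos ht'
    have h2 : 2 * S ^ 2 = 2 * (S₁ : ℝ) * S₂ := by rw [hSsq, mul_assoc]
    rw [himg]
    calc ((T'.card : ℕ) : ℝ) * (N : ℝ) ≤ 2 * S ^ 2 := hfin
      _ = 2 * (S₁ : ℝ) * S₂ := h2

theorem stmt13 :
    ∃ c : ℝ, 0 < c ∧ ∃ C : ℝ, 0 < C ∧
      ∀ (p n m₁ m₂ : ℕ), p.Prime → 3 ≤ p → n < m₁ + m₂ → m₁ ≤ n → m₂ ≤ n →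
      ∀ (W₁ W₂ : Submodule (ZMod p) (Fin n → ZMod p)),
        Module.finrank (ZMod p) W₁ = n - m₁ →
        Module.finrank (ZMod p) W₂ = n - m₂ →
        W₁ ⊓ W₂ = ⊥ →
      ∀ (K : Set (Fin n → ZMod p)) (M₁ M₂ : ℕ), K.Finite → K.Nonempty →
        (W₁.mkQ '' K).ncard ≤ M₁ → (W₂.mkQ '' K).ncard ≤ M₂ →
        ∃ K' ⊆ K, c * K.ncard / Real.log p ≤ (K'.ncard : ℝ) ∧
          (((W₁ ⊔ W₂).mkQ '' K').ncard : ℝ) ≤ C * M₁ * M₂ / K'.ncard := by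
  refine ⟨1/2, by norm_num, 2, by norm_num, ?_⟩
  intro p n m₁ m₂ hp hp3 _ _ _ W₁ W₂ _ _ hW K M₁ M₂ hKfin hKne hM₁ hM₂
  classical
  set A : Finset (Fin n → ZMod p) := hKfin.toFinset with hA
  have hAK : (A : Set (Fin n → ZMod p)) = K := hKfin.coe_toFinset
  have hAne : A.Nonempty := by
    rw [← Finset.coe_nonempty, hAK]; exact hKne
  have hinj : ∀ x ∈ A, ∀ y ∈ A, W₁.mkQ x = W₁.mkQ y → W₂.mkQ x = W₂.mkQ y → x = y := by
    intro x _ y _ e1 e2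
    have m1 : x - y ∈ W₁ := by
      rw [← Submodule.Quotient.eq]
      simpa [Submodule.mkQ_apply] using e1
    have m2 : x - y ∈ W₂ := by
      rw [← Submodule.Quotient.eq]
      simpa [Submodule.mkQ_apply] using e2
    have : x - y ∈ W₁ ⊓ W₂ := ⟨m1, m2⟩
    rw [hW, Submodule.mem_bot, sub_eq_zero] at this
    exact this
  have hcomp : ∀ (W W' : Submodule (ZMod p) (Fin n → ZMod p)), W ≤ W' →
      ∀ x y : Fin n → ZMod p, W.mkQ x = W.mkQ y → W'.mkQ x = W'.mkQ y := by
    intro W W' hle x y e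
    have : x - y ∈ W := by
      rw [← Submodule.Quotient.eq]
      simpa [Submodule.mkQ_apply] using e
    have : x - y ∈ W' := hle this
    simpa [Submodule.mkQ_apply] using (Submodule.Quotient.eq W').mpr this
  obtain ⟨A', hsub, hsize, himg⟩ := stmt13_core A ((W₁ ⊔ W₂).mkQ) W₁.mkQ W₂.mkQ hinj
    (hcomp W₁ (W₁ ⊔ W₂) le_sup_left) (hcomp W₂ (W₁ ⊔ W₂) le_sup_right) hAne
  refine ⟨(A' : Set (Fin n → ZMod p)), by rw [← hAK]; exact_mod_cast hsub, ?_, ?_⟩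
  · -- size bound
    rw [Set.ncard_coe_finset, ← hAK, Set.ncard_coe_finset]
    have hlog : 1 ≤ Real.log p := by
      have h3 : (3 : ℝ) ≤ p := by exact_mod_cast hp3
      have : Real.log 3 ≤ Real.log p := Real.log_le_log (by norm_num) h3
      have h1 : 1 < Real.log 3 := by
        rw [Real.lt_log_iff_exp_lt (by norm_num)]
        calc Real.exp 1 < 2.7182818286 := Real.exp_one_lt_d9
          _ < 3 := by norm_num
      linarith
    have hNpos : (0 : ℝ) ≤ (A.card : ℝ) := by positivity
    calc 1/2 * (A.card : ℝ) / Real.log p ≤ 1/2 * (A.card : ℝ) / 1 := by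
          apply div_le_div_of_nonneg_left (by positivity) (by norm_num) hlog
      _ = 1/2 * (A.card : ℝ) := by ring
      _ ≤ (A'.card : ℝ) := by linarith
  · -- image bound
    have hA'pos : (0 : ℝ) < (A'.card : ℝ) := by
      have : (1 : ℝ) ≤ (A.card : ℝ) := by exact_mod_cast Finset.card_pos.mpr hAne
      linarith
    have him : (W₁ ⊔ W₂).mkQ '' (A' : Set (Fin n → ZMod p)) = ↑(A'.image (W₁ ⊔ W₂).mkQ) := by
      rw [Finset.coe_image]
    rw [him, Set.ncard_coe_finset, Set.ncard_coe_finset, le_div_iff₀ hA'pos]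
    have hM₁' : ((A.image W₁.mkQ).card : ℝ) ≤ (M₁ : ℝ) := by
      have : (A.image W₁.mkQ : Set _) = W₁.mkQ '' K := by rw [Finset.coe_image, hAK]
      have := Set.ncard_coe_finset (A.image W₁.mkQ)
      rw [‹(A.image W₁.mkQ : Set _) = W₁.mkQ '' K›] at this
      exact_mod_cast this ▸ hM₁
    have hM₂' : ((A.image W₂.mkQ).card : ℝ) ≤ (M₂ : ℝ) := by
      have heq : (A.image W₂.mkQ : Set _) = W₂.mkQ '' K := by rw [Finset.coe_image, hAK]
      have h2 := Set.ncard_coe_finset (A.image W₂.mkQ)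
      rw [heq] at h2
      exact_mod_cast h2 ▸ hM₂
    have hAA' : (A'.card : ℝ) ≤ (A.card : ℝ) := by exact_mod_cast Finset.card_le_card hsub
    have h0 : (0 : ℝ) ≤ ((A'.image (W₁ ⊔ W₂).mkQ).card : ℝ) := by positivity
    calc ((A'.image (W₁ ⊔ W₂).mkQ).card : ℝ) * (A'.card : ℝ)
        ≤ ((A'.image (W₁ ⊔ W₂).mkQ).card : ℝ) * (A.card : ℝ) :=
          mul_le_mul_of_nonneg_left hAA' h0
      _ ≤ 2 * (A.image W₁.mkQ).card * (A.image W₂.mkQ).card := himg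
      _ ≤ 2 * (M₁ : ℝ) * (M₂ : ℝ) := by gcongr
end
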